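/- arXiv:1309.4802 — 2 statements merged into one kernel-verified Lean document; each statement's English description precedes it below -/
import Mathlib

section
/- For β ∈ {12★, 1★3, ★23}: if a permutation τ is obtained from a permutation π by repeatedly applying the replacement 123 → β to arbitrarily chosen copies of 123 until the resulting permutation avoids 123, then τ is the primitive permutation of π under 123 ↔ β; in particular, the result does not depend on the choices of copies made, and every permutation equivalent to π has length at least |τ|. -/
/-!
Pattern-replacement equivalences between permutations of different lengths
(arXiv:1309.4802). A ★-pattern is encoded as a `List (Option ℕ)`, where `none`
is the placeholder ★ and `some k` an integer entry.
-/

/-- A ★-pattern / star-string entry: `none` is ★, `some k` an integer `k`. -/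
abbrev SPat := List (Option ℕ)

/-- The integer entries of a star-string, in order. -/
def ints (ρ : SPat) : List ℕ := ρ.filterMap id

/-- Two lists of naturals are order-isomorphic. -/
def OrdIso (u v : List ℕ) : Prop :=
  u.length = v.length ∧
  ∀ i j, i < u.length → j < u.length → (u.getD i 0 < u.getD j 0 ↔ v.getD i 0 < v.getD j 0)

/-- A valid string of distinct positive integers and ★'s. -/
def StarStr (ρ : SPat) : Prop := (ints ρ).Nodup ∧ ∀ k ∈ ints ρ, 0 < k

/-- `r` (entry by entry) forms a copy of the ★-pattern `δ`: ★'s in the same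
positions, and the integer entries order-isomorphic. -/
def IsCopy (r δ : SPat) : Prop :=
  r.length = δ.length ∧
  (∀ i, (r.getD i none = none ↔ δ.getD i none = none)) ∧
  OrdIso (ints r) (ints δ)

/-- `Repl a b ρ₁ ρ₂` : `ρ₂` is obtained from `ρ₁` by replacing an occurrence of `a`
as a (not necessarily contiguous) substring of `ρ₁` by `b`, entry by entry at the
same positions. -/
inductive Repl : SPat → SPat → SPat → SPat → Prop
  | nil : Repl [] [] [] []
  | keep {a b ρ₁ ρ₂} (x : Option ℕ) : Repl a b ρ₁ ρ₂ → Repl a b (x :: ρ₁) (x :: ρ₂)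
  | repl {a b ρ₁ ρ₂} (x y : Option ℕ) :
      Repl a b ρ₁ ρ₂ → Repl (x :: a) (y :: b) (x :: ρ₁) (y :: ρ₂)

/-- `π` is a permutation of `1, …, n` (as a list). -/
def IsPermList (π : List ℕ) : Prop := π.Perm (List.range' 1 π.length)

/-- `σ` is a result of the replacement `α → β` applied to the permutation `π`:
(1) `ρ₁` is `π` renumbered (order-isomorphically) with ★'s inserted anywhere;
(2) a substring `a` of `ρ₁` forming a copy of `α` is replaced (in place) by a
string `b` that is a copy of `β`, whose integers meet `ρ₁` only inside `a`, and
which agrees with `a` on the integer entries common to `α` and `β`;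
(3) dropping ★'s and renumbering gives the permutation `σ`. -/
def IsResult (α β : SPat) (π σ : List ℕ) : Prop :=
  ∃ ρ₁ ρ₂ a b : SPat,
    StarStr ρ₁ ∧ OrdIso π (ints ρ₁) ∧
    IsCopy a α ∧
    StarStr b ∧ IsCopy b β ∧
    (∀ k ∈ ints b, k ∈ ints ρ₁ → k ∈ ints a) ∧
    (∀ i j x, α.getD i none = some x → β.getD j none = some x →
      a.getD i none = b.getD j none) ∧
    Repl a b ρ₁ ρ₂ ∧
    IsPermList σ ∧ OrdIso (ints ρ₂) σ

/-- Equivalence under the bidirectional replacement `α ↔ β`: a finite sequence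
of `α → β` and `β → α` replacements. -/
def PermEquiv (α β : SPat) (π σ : List ℕ) : Prop :=
  Relation.ReflTransGen (fun τ υ => IsResult α β τ υ ∨ IsResult β α τ υ) π σ

/-- `π` is isolated under `α ↔ β`: no other permutation is equivalent to it. -/
def Isolated (α β : SPat) (π : List ℕ) : Prop :=
  ∀ σ : List ℕ, IsPermList σ → PermEquiv α β π σ → σ = π

/-- The identity permutation `1 2 ⋯ n`. -/
def idPerm (n : ℕ) : List ℕ := List.range' 1 n

/-- The reverse identity permutation `n (n-1) ⋯ 1`. -/
def ridPerm (n : ℕ) : List ℕ := (List.range' 1 n).reverse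

def pat123 : SPat := [some 1, some 2, some 3]
def pat132 : SPat := [some 1, some 3, some 2]
def patS32 : SPat := [none, some 3, some 2]
def pat3S2 : SPat := [some 3, none, some 2]
def pat32S : SPat := [some 3, some 2, none]
def patS31 : SPat := [none, some 3, some 1]
def pat3S1 : SPat := [some 3, none, some 1]
def pat31S : SPat := [some 3, some 1, none]
def patS21 : SPat := [none, some 2, some 1]
def pat2S1 : SPat := [some 2, none, some 1]
def pat21S : SPat := [some 2, some 1, none]
def pat12S : SPat := [some 1, some 2, none]
def pat1S3 : SPat := [some 1, none, some 3]
def patS23 : SPat := [none, some 2, some 3]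
def patS12 : SPat := [none, some 1, some 2]
def pat23S : SPat := [some 2, some 3, none]
def pat13S : SPat := [some 1, some 3, none]
def pat1S2 : SPat := [some 1, none, some 2]

/-- `l` contains a (not necessarily contiguous) copy of the pattern `123`. -/
def contains123 (l : List ℕ) : Prop :=
  ∃ i j k, i < j ∧ j < k ∧ k < l.length ∧
    l.getD i 0 < l.getD j 0 ∧ l.getD j 0 < l.getD k 0

/-- All copies of `123` in `l` (as triples of 0-indexed positions), listed in
lexicographic order: first by position of the smallest element, then of the
middle element, then of the largest element. -/
def triples123 (l : List ℕ) : List (ℕ × ℕ × ℕ) :=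
  (List.range l.length).flatMap fun i =>
    (List.range l.length).flatMap fun j =>
      (List.range l.length).filterMap fun k =>
        if i < j ∧ j < k ∧ l.getD i 0 < l.getD j 0 ∧ l.getD j 0 < l.getD k 0
        then some (i, j, k) else none

/-- The leftmost copy of `123` in `l`, if any. -/
def leftmost123 (l : List ℕ) : Option (ℕ × ℕ × ℕ) := (triples123 l).head?

/-- Repeatedly (with fuel) erase, from the leftmost copy of `123`, the entry at
the position selected by `d`, until no copy of `123` remains. -/
def pIter (d : ℕ × ℕ × ℕ → ℕ) : ℕ → List ℕ → List ℕ
  | 0, l => l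
  | n + 1, l =>
    match leftmost123 l with
    | none => l
    | some t => pIter d n (l.eraseIdx (d t))

/-- Renumber a list of distinct naturals, preserving relative order, into a
permutation of `1, …, n`. -/
def renumber (l : List ℕ) : List ℕ := l.map fun x => (l.filter fun y => y ≤ x).length

def pGamma (d : ℕ × ℕ × ℕ → ℕ) (l : List ℕ) : List ℕ := renumber (pIter d l.length l)

/-- `p_γ` for `γ = 12★`: repeatedly delete the largest element of the leftmost
copy of `123`, then renumber. -/
def p12star (l : List ℕ) : List ℕ := pGamma (fun t => t.2.2) l

/-- `p_γ` for `γ = 1★3`: repeatedly delete the middle element of the leftmost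
copy of `123`, then renumber. -/
def p1star3 (l : List ℕ) : List ℕ := pGamma (fun t => t.2.1) l

namespace Aux

theorem ordIso_refl (u : List ℕ) : OrdIso u u := ⟨rfl, fun _ _ _ _ => Iff.rfl⟩

theorem ordIso_symm {u v : List ℕ} (h : OrdIso u v) : OrdIso v u :=
  ⟨h.1.symm, fun i j hi hj => (h.2 i j (h.1 ▸ hi) (h.1 ▸ hj)).symm⟩

theorem ordIso_trans {u v w : List ℕ} (h : OrdIso u v) (h' : OrdIso v w) : OrdIso u w :=
  ⟨h.1.trans h'.1, fun i j hi hj =>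
    (h.2 i j hi hj).trans (h'.2 i j (h.1 ▸ hi) (h.1 ▸ hj))⟩

theorem cnt_succ {u : List ℕ} (hu : u.Nodup) {b : ℕ} (hb : b ∈ u) :
    (u.filter fun y => y ≤ b).length = (u.filter fun y => y < b).length + 1 := by
  induction u with
  | nil => simp at hb
  | cons a t ih =>
    rw [List.nodup_cons] at hu
    obtain ⟨ha, ht⟩ := hu
    simp only [List.mem_cons] at hb
    rcases hb with rfl | hb
    · have h1 : (t.filter fun y => y ≤ b) = t.filter fun y => y < b := by
        apply List.filter_congr
        intro x hx
        have hxa : x ≠ b := fun h => ha (h ▸ hx)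
        simp only [decide_eq_decide]
        omega
      simp [List.filter_cons, h1]
    · have hab : a ≠ b := fun h => ha (h ▸ hb)
      have := ih ht hb
      by_cases h : a ≤ b
      · have h2 : ¬ b ≤ a := fun h2 => hab (le_antisymm h h2)
        have h3 : a < b := lt_of_le_of_ne h hab
        simp [List.filter_cons, h, h3, this]
      · have h3 : ¬ a < b := fun h3 => h h3.le
        simp [List.filter_cons, h, h3, this]

theorem rank_mono {u : List ℕ} {a b : ℕ} (hab : a ≤ b) :
    (u.filter fun y => y ≤ a).length ≤ (u.filter fun y => y ≤ b).length := by
  simp only [← List.countP_eq_length_filter]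
  apply List.countP_mono_left
  intro x _ hx
  simp only [decide_eq_true_eq] at *
  omega

theorem rank_lt_of_lt {u : List ℕ} (hu : u.Nodup) {a b : ℕ} (hb : b ∈ u) (hab : a < b) :
    (u.filter fun y => y ≤ a).length < (u.filter fun y => y ≤ b).length := by
  have h1 : (u.filter fun y => y ≤ a).length ≤ (u.filter fun y => y < b).length := by
    simp only [← List.countP_eq_length_filter]
    apply List.countP_mono_left
    intro x _ hx
    simp only [decide_eq_true_eq] at *
    omega
  have := cnt_succ hu hb
  omega

theorem rank_lt_iff {u : List ℕ} (hu : u.Nodup) {a b : ℕ} (ha : a ∈ u) (hb : b ∈ u) :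
    (u.filter fun y => y ≤ a).length < (u.filter fun y => y ≤ b).length ↔ a < b := by
  constructor
  · intro h
    by_contra hab
    push_neg at hab
    exact absurd (rank_mono hab) (not_le.mpr h)
  · exact rank_lt_of_lt hu hb

@[simp] theorem length_renumber (l : List ℕ) : (renumber l).length = l.length := by
  simp [renumber]

theorem getD_eq_getElem' (l : List ℕ) {i : ℕ} (h : i < l.length) : l.getD i 0 = l[i] :=
  List.getD_eq_getElem l 0 h

theorem renumber_getD (l : List ℕ) {i : ℕ} (h : i < l.length) :
    (renumber l).getD i 0 = (l.filter fun y => y ≤ l[i]).length := by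
  rw [getD_eq_getElem' _ (by simpa using h)]
  simp [renumber]

theorem ordIso_renumber {u : List ℕ} (hu : u.Nodup) : OrdIso u (renumber u) := by
  refine ⟨by simp, fun i j hi hj => ?_⟩
  rw [renumber_getD u hi, renumber_getD u hj, getD_eq_getElem' u hi, getD_eq_getElem' u hj]
  exact (rank_lt_iff hu (u.getElem_mem hi) (u.getElem_mem hj)).symm

theorem isPermList_renumber {u : List ℕ} (hu : u.Nodup) : IsPermList (renumber u) := by
  have hnd : (renumber u).Nodup := by
    apply (List.Nodup.map_on · hu)
    intro a ha b hb hab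
    rcases lt_trichotomy a b with h | h | h
    · exact absurd (rank_lt_of_lt hu hb h) (by omega)
    · exact h
    · exact absurd (rank_lt_of_lt hu ha h) (by omega)
  have hsub : renumber u ⊆ List.range' 1 u.length := by
    intro x hx
    simp only [renumber, List.mem_map] at hx
    rcases hx with ⟨a, ha, rfl⟩
    have h1 : 0 < (u.filter fun y => y ≤ a).length :=
      List.length_pos_iff.mpr (List.ne_nil_of_mem (List.mem_filter.mpr ⟨ha, by simp⟩))
    have h2 : (u.filter fun y => y ≤ a).length ≤ u.length := List.length_filter_le _ _
    simp only [List.mem_range'_1]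
    omega
  unfold IsPermList
  rw [length_renumber]
  exact (hnd.subperm hsub).perm_of_length_le (by simp)

theorem range'_countP (n c : ℕ) :
    (List.range' 1 n).countP (fun y => y ≤ c) = min c n := by
  induction n with
  | zero => simp
  | succ n ih =>
    rw [List.range'_concat, List.countP_append, ih]
    by_cases h : 1 + n ≤ c <;> simp [List.countP_cons, h] <;> omega

theorem self_eq_map_getD (u : List ℕ) :
    u = (List.range u.length).map (fun j => u.getD j 0) := by
  apply List.ext_getElem (by simp)
  intro i h1 h2
  simp only [List.getElem_map, List.getElem_range]
  rw [getD_eq_getElem' u h1]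

theorem permList_eq_of_ordIso {u v : List ℕ} (hu : IsPermList u) (hv : IsPermList v)
    (h : OrdIso u v) : u = v := by
  have hlen := h.1
  apply List.ext_getElem hlen
  intro i hi hi'
  have key : ∀ (w : List ℕ), IsPermList w → ∀ {i : ℕ} (h : i < w.length),
      w[i] = (List.range w.length).countP (fun j => w.getD j 0 ≤ w[i]) := by
    intro w hw i hiw
    have hmem : w[i] ∈ List.range' 1 w.length := hw.mem_iff.mp (w.getElem_mem hiw)
    simp only [List.mem_range'_1] at hmem
    have : w.countP (fun y => y ≤ w[i]) = min w[i] w.length := by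
      rw [hw.countP_eq]
      exact range'_countP _ _
    have hmin : min w[i] w.length = w[i] := by omega
    have h4 := congrArg (List.countP (fun y => decide (y ≤ w[i]))) (self_eq_map_getD w)
    rw [List.countP_map] at h4
    calc w[i] = min w[i] w.length := hmin.symm
    _ = List.countP (fun y => decide (y ≤ w[i])) w := this.symm
    _ = _ := by rw [h4]; rfl
  rw [key u hu hi, key v hv hi']
  rw [hlen]
  apply List.countP_congr
  intro j hj
  simp only [List.mem_range] at hj
  have hcomp := h.2 i j hi (by omega)
  have hcomp2 := h.2 j i (by omega) hi
  rw [getD_eq_getElem' u hi] at hcomp hcomp2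
  rw [getD_eq_getElem' v hi'] at hcomp hcomp2
  simp only [decide_eq_true_eq]
  constructor
  · intro hle
    by_contra hgt
    push_neg at hgt
    exact absurd (hcomp.mpr hgt) (by omega)
  · intro hle
    by_contra hgt
    push_neg at hgt
    exact absurd (hcomp.mp hgt) (by omega)

theorem permList_nodup {u : List ℕ} (hu : IsPermList u) : u.Nodup :=
  hu.nodup_iff.mpr (List.nodup_range')

theorem eq_renumber_of_ordIso {u v : List ℕ} (hu : u.Nodup) (hv : IsPermList v)
    (h : OrdIso u v) : v = renumber u :=
  permList_eq_of_ordIso hv (isPermList_renumber hu) (ordIso_trans (ordIso_symm h) (ordIso_renumber hu))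

theorem renumber_self {u : List ℕ} (hu : IsPermList u) : renumber u = u :=
  (eq_renumber_of_ordIso (permList_nodup hu) hu (ordIso_refl u)).symm

theorem renumber_eq_of_ordIso {u v : List ℕ} (hu : u.Nodup) (hv : v.Nodup)
    (h : OrdIso u v) : renumber u = renumber v := by
  have : IsPermList (renumber v) := isPermList_renumber hv
  exact (eq_renumber_of_ordIso hu this (ordIso_trans h (ordIso_renumber hv))).symm

end Aux
namespace Aux

@[simp] theorem ints_nil : ints [] = [] := rfl
@[simp] theorem ints_cons_some (x : ℕ) (ρ : SPat) : ints (some x :: ρ) = x :: ints ρ := by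
  simp [ints]
@[simp] theorem ints_cons_none (ρ : SPat) : ints (none :: ρ) = ints ρ := by simp [ints]
@[simp] theorem ints_append (ρ ρ' : SPat) : ints (ρ ++ ρ') = ints ρ ++ ints ρ' :=
  List.filterMap_append

theorem eraseIdx_getD {l : List ℕ} {k i : ℕ} (h : i < (l.eraseIdx k).length) :
    (l.eraseIdx k).getD i 0 = l.getD (if i < k then i else i + 1) 0 := by
  have hlen := List.length_eraseIdx (l := l) (i := k)
  rw [getD_eq_getElem' _ h, List.getElem_eraseIdx]
  by_cases h' : i < k
  · rw [dif_pos h', if_pos h', getD_eq_getElem' _ (by split at hlen <;> omega)]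
  · rw [dif_neg h', if_neg h', getD_eq_getElem' _ (by split at hlen <;> omega)]

theorem ordIso_eraseIdx {u v : List ℕ} (h : OrdIso u v) (k : ℕ) :
    OrdIso (u.eraseIdx k) (v.eraseIdx k) := by
  have h1 := List.length_eraseIdx (l := u) (i := k)
  have h2 := List.length_eraseIdx (l := v) (i := k)
  have hlen : (u.eraseIdx k).length = (v.eraseIdx k).length := by
    rw [h1, h2, h.1]
  refine ⟨hlen, fun i j hi hj => ?_⟩
  rw [eraseIdx_getD hi, eraseIdx_getD hj, eraseIdx_getD (hlen ▸ hi), eraseIdx_getD (hlen ▸ hj)]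
  have hiu : (if i < k then i else i + 1) < u.length := by split at h1 <;> split <;> omega
  have hju : (if j < k then j else j + 1) < u.length := by split at h1 <;> split <;> omega
  exact h.2 _ _ hiu hju

theorem eraseIdx_append_length {α : Type*} (A : List α) (x : α) (B : List α) :
    (A ++ x :: B).eraseIdx A.length = A ++ B := by
  induction A with
  | nil => simp [List.eraseIdx]
  | cons a A ih => simp [List.eraseIdx_cons_succ, ih]

theorem getD_append_length (A : List ℕ) (x : ℕ) (B : List ℕ) :
    (A ++ x :: B).getD A.length 0 = x := by
  induction A with
  | nil => simp
  | cons a A ih => simpa using ih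

/-- Decomposition of a replacement into context chunks. -/
def weave (c0 : SPat) (l : List (Option ℕ × SPat)) : SPat :=
  c0 ++ l.flatMap fun p => p.1 :: p.2

theorem repl_weave {a b ρ₁ ρ₂ : SPat} (h : Repl a b ρ₁ ρ₂) :
    ∃ c0 cs, cs.length = a.length ∧ b.length = a.length ∧
      ρ₁ = weave c0 (a.zip cs) ∧ ρ₂ = weave c0 (b.zip cs) := by
  induction h with
  | nil => exact ⟨[], [], rfl, rfl, rfl, rfl⟩
  | keep x h ih =>
    obtain ⟨c0, cs, h1, h2, h3, h4⟩ := ih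
    exact ⟨x :: c0, cs, h1, h2, by simp [weave, h3], by simp [weave, h4]⟩
  | repl x y h ih =>
    obtain ⟨c0, cs, h1, h2, h3, h4⟩ := ih
    exact ⟨[], c0 :: cs, by simp [h1], by simp [h2], by simp [weave, h3], by simp [weave, h4]⟩

section Keep

attribute [local instance] Classical.propDecidable

variable (Q Q' : ℕ → Prop)

noncomputable def keepAux : ℕ → List ℕ → List ℕ
  | _, [] => []
  | i, x :: xs => if Q i then keepAux (i + 1) xs else x :: keepAux (i + 1) xs

@[simp] theorem keepAux_nil (i : ℕ) : keepAux Q i [] = [] := rfl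

theorem keepAux_cons (i : ℕ) (x : ℕ) (xs : List ℕ) : keepAux Q i (x :: xs) =
    if Q i then keepAux Q (i + 1) xs else x :: keepAux Q (i + 1) xs := rfl

theorem keepAux_sublist (i : ℕ) (l : List ℕ) : (keepAux Q i l).Sublist l := by
  induction l generalizing i with
  | nil => simp
  | cons x xs ih =>
    rw [keepAux_cons]
    split
    · exact (ih (i + 1)).trans (List.sublist_cons_self x xs)
    · exact (ih (i + 1)).cons₂ x

theorem keepAux_length_le (i : ℕ) (l : List ℕ) : (keepAux Q i l).length ≤ l.length :=
  (keepAux_sublist Q i l).length_le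

theorem keepAux_append (i : ℕ) (u v : List ℕ) :
    keepAux Q i (u ++ v) = keepAux Q i u ++ keepAux Q (i + u.length) v := by
  induction u generalizing i with
  | nil => simp
  | cons x xs ih =>
    rw [List.cons_append, keepAux_cons, keepAux_cons]
    have harg : i + (x :: xs).length = (i + 1) + xs.length := by simp; omega
    rw [harg]
    split
    · rw [ih (i + 1)]
    · rw [ih (i + 1), List.cons_append]

theorem keepAux_congr {Q Q' : ℕ → Prop} (i : ℕ) (l : List ℕ)
    (h : ∀ j, i ≤ j → j < i + l.length → (Q j ↔ Q' j)) :
    keepAux Q i l = keepAux Q' i l := by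
  induction l generalizing i with
  | nil => simp
  | cons x xs ih =>
    rw [keepAux_cons, keepAux_cons]
    have hQ : Q i ↔ Q' i := h i le_rfl (by simp)
    have hih : keepAux Q (i + 1) xs = keepAux Q' (i + 1) xs :=
      ih (i + 1) (fun j hj hj' => h j (by omega) (by simp at hj' ⊢; omega))
    by_cases hqi : Q i
    · rw [if_pos hqi, if_pos (hQ.mp hqi), hih]
    · rw [if_neg hqi, if_neg (fun h' => hqi (hQ.mpr h')), hih]

theorem keepAux_shift (i : ℕ) (l : List ℕ) :
    keepAux Q (i + 1) l = keepAux (fun k => Q (k + 1)) i l := by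
  induction l generalizing i with
  | nil => simp
  | cons x xs ih =>
    rw [keepAux_cons, keepAux_cons]
    rw [ih (i + 1)]

theorem keepAux_map (f : ℕ → ℕ) (i : ℕ) (l : List ℕ) :
    keepAux Q i (l.map f) = (keepAux Q i l).map f := by
  induction l generalizing i with
  | nil => simp
  | cons x xs ih =>
    rw [List.map_cons, keepAux_cons, keepAux_cons]
    split
    · exact ih (i + 1)
    · rw [List.map_cons, ih (i + 1)]

theorem keepAux_of_not (i : ℕ) (l : List ℕ) (h : ∀ j, ¬ Q j) : keepAux Q i l = l := by
  induction l generalizing i with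
  | nil => simp
  | cons x xs ih => rw [keepAux_cons, if_neg (h i), ih (i + 1)]

end Keep

end Aux
namespace Aux

theorem unshift_lt {l : List ℕ} {m t : ℕ} (hu : t < (l.eraseIdx m).length) :
    (if t < m then t else t + 1) < l.length := by
  have hlen := List.length_eraseIdx (l := l) (i := m)
  split <;> split at hlen <;> omega

theorem unshift_mono {m t t' : ℕ} (h : t < t') :
    (if t < m then t else t + 1) < (if t' < m then t' else t' + 1) := by
  split <;> split <;> omega

theorem shift_lt {l : List ℕ} {m t : ℕ} (hm : m < l.length) (ht : t < l.length) (htm : t ≠ m) :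
    (if t < m then t else t - 1) < (l.eraseIdx m).length := by
  have hlen := List.length_eraseIdx (l := l) (i := m)
  split <;> split at hlen <;> omega

theorem shift_getD {l : List ℕ} {m t : ℕ} (hm : m < l.length) (ht : t < l.length) (htm : t ≠ m) :
    (l.eraseIdx m).getD (if t < m then t else t - 1) 0 = l.getD t 0 := by
  rw [eraseIdx_getD (shift_lt hm ht htm)]
  by_cases h : t < m
  · simp [h]
  · simp [h, show ¬ (t - 1 < m) by omega, show t - 1 + 1 = t by omega]

theorem shift_mono {m t t' : ℕ} (h : t < t') (ht : t ≠ m) (ht' : t' ≠ m) :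
    (if t < m then t else t - 1) < (if t' < m then t' else t' - 1) := by
  split <;> split <;> omega

/-- A position selector with the properties needed for the kernel argument. -/
structure Sel (P : List ℕ → ℕ → Prop) : Prop where
  lt : ∀ l k, P l k → k < l.length
  ord : ∀ {l l'}, OrdIso l l' → ∀ k, P l k → P l' k
  lift : ∀ l m k, P (l.eraseIdx m) k → P l (if k < m then k else k + 1)
  pres : ∀ l m k, P l m → P l k → k ≠ m → P (l.eraseIdx m) (if k < m then k else k - 1)
  ex : ∀ l, contains123 l ↔ ∃ k, P l k

section Framework

attribute [local instance] Classical.propDecidable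

variable {P : List ℕ → ℕ → Prop}

noncomputable def keepVals (P : List ℕ → ℕ → Prop) (l : List ℕ) : List ℕ := keepAux (P l) 0 l

noncomputable def Kern (P : List ℕ → ℕ → Prop) (l : List ℕ) : List ℕ := renumber (keepVals P l)

theorem keepVals_sublist (P : List ℕ → ℕ → Prop) (l : List ℕ) : (keepVals P l).Sublist l :=
  keepAux_sublist _ 0 l

theorem keepVals_eraseIdx (hP : Sel P) {l : List ℕ} {m : ℕ} (hm : P l m) :
    keepVals P (l.eraseIdx m) = keepVals P l := by
  have hml : m < l.length := hP.lt _ _ hm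
  have hl : l = l.take m ++ l[m] :: l.drop (m + 1) := by
    rw [List.getElem_cons_drop, List.take_append_drop]
  have hA : (l.take m).length = m := by
    rw [List.length_take]; omega
  have he : l.eraseIdx m = l.take m ++ l.drop (m + 1) := by
    conv_lhs => rw [hl]
    have := eraseIdx_append_length (l.take m) l[m] (l.drop (m + 1))
    rwa [hA] at this
  unfold keepVals
  set Q := P l with hQ
  set Q' := P (l.eraseIdx m) with hQ'
  conv_rhs => rw [hl]
  rw [he, keepAux_append, keepAux_append]
  simp only [hA, Nat.zero_add]
  rw [keepAux_cons, if_pos (show Q m from hm)]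
  congr 1
  · apply keepAux_congr
    intro j _ hj
    rw [Nat.zero_add, hA] at hj
    constructor
    · intro h
      have := hP.lift l m j h
      rwa [if_pos hj] at this
    · intro h
      have := hP.pres l m j hm h (by omega)
      rwa [if_pos hj] at this
  · rw [keepAux_shift]
    apply keepAux_congr
    intro j hj _
    constructor
    · intro h
      have := hP.lift l m j h
      rwa [if_neg (by omega)] at this
    · intro h
      have := hP.pres l m (j + 1) hm h (by omega)
      rwa [if_neg (by omega), Nat.add_sub_cancel] at this

theorem keepVals_renumber (hP : Sel P) {l : List ℕ} (hl : l.Nodup) :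
    keepVals P (renumber l) = (keepVals P l).map fun x => (l.filter fun y => y ≤ x).length := by
  unfold keepVals
  have h1 : keepAux (P (renumber l)) 0 (renumber l)
      = keepAux (P l) 0 (renumber l) := by
    apply keepAux_congr
    intro j _ _
    exact ⟨fun h => hP.ord (ordIso_symm (ordIso_renumber hl)) j h,
      fun h => hP.ord (ordIso_renumber hl) j h⟩
  rw [h1]
  have h2 : renumber l = l.map fun x => (l.filter fun y => y ≤ x).length := rfl
  conv_lhs => rw [h2]
  rw [keepAux_map]

theorem ordIso_map_rank {l w : List ℕ} (hl : l.Nodup) (hw : ∀ x ∈ w, x ∈ l) :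
    OrdIso w (w.map fun x => (l.filter fun y => y ≤ x).length) := by
  refine ⟨by simp, fun i j hi hj => ?_⟩
  rw [getD_eq_getElem' _ hi, getD_eq_getElem' _ hj,
    getD_eq_getElem' _ (by simpa using hi), getD_eq_getElem' _ (by simpa using hj),
    List.getElem_map, List.getElem_map]
  exact (rank_lt_iff hl (hw _ (w.getElem_mem hi)) (hw _ (w.getElem_mem hj))).symm

theorem kern_renumber (hP : Sel P) {l : List ℕ} (hl : l.Nodup) :
    Kern P (renumber l) = Kern P l := by
  unfold Kern
  rw [keepVals_renumber hP hl]
  have hnd : (keepVals P l).Nodup := (keepVals_sublist P l).nodup hl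
  have hnd2 : ((keepVals P l).map fun x => (l.filter fun y => y ≤ x).length).Nodup := by
    rw [← keepVals_renumber hP hl]
    exact (keepVals_sublist P (renumber l)).nodup (permList_nodup (isPermList_renumber hl))
  exact (renumber_eq_of_ordIso hnd hnd2
    (ordIso_map_rank hl fun x hx => (keepVals_sublist P l).subset hx)).symm

theorem kern_step (hP : Sel P) {l : List ℕ} (hl : l.Nodup) {k : ℕ} (hk : P l k) :
    Kern P (renumber (l.eraseIdx k)) = Kern P l := by
  rw [kern_renumber hP ((l.eraseIdx_sublist k).nodup hl)]
  unfold Kern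
  rw [keepVals_eraseIdx hP hk]

theorem kern_of_avoid (hP : Sel P) {l : List ℕ} (hl : IsPermList l) (h : ¬ contains123 l) :
    Kern P l = l := by
  have hnp : ∀ j, ¬ P l j := fun j hj => h ((hP.ex l).mpr ⟨j, hj⟩)
  unfold Kern keepVals
  rw [keepAux_of_not _ _ _ hnp]
  exact renumber_self hl

theorem kern_length_le (P : List ℕ → ℕ → Prop) (l : List ℕ) :
    (Kern P l).length ≤ l.length := by
  unfold Kern
  rw [length_renumber]
  exact (keepVals_sublist P l).length_le

theorem kern_eq_of_length (hP : Sel P) {l : List ℕ} (hl : IsPermList l)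
    (h : (Kern P l).length = l.length) : Kern P l = l := by
  unfold Kern at h ⊢
  rw [length_renumber] at h
  rw [(keepVals_sublist P l).eq_of_length h]
  exact renumber_self hl

end Framework

end Aux
namespace Aux

def TopSel (l : List ℕ) (k : ℕ) : Prop :=
  k < l.length ∧ ∃ i j, i < j ∧ j < k ∧ l.getD i 0 < l.getD j 0 ∧ l.getD j 0 < l.getD k 0

def MidSel (l : List ℕ) (k : ℕ) : Prop :=
  k < l.length ∧ ∃ i j, i < k ∧ k < j ∧ j < l.length ∧
    l.getD i 0 < l.getD k 0 ∧ l.getD k 0 < l.getD j 0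

def BotSel (l : List ℕ) (k : ℕ) : Prop :=
  k < l.length ∧ ∃ i j, k < i ∧ i < j ∧ j < l.length ∧
    l.getD k 0 < l.getD i 0 ∧ l.getD i 0 < l.getD j 0

theorem topSel_sel : Sel TopSel := by
  constructor
  · exact fun l k h => h.1
  · rintro l l' h k ⟨hk, i, j, hij, hjk, h1, h2⟩
    have hi : i < l.length := by omega
    have hj : j < l.length := by omega
    exact ⟨h.1 ▸ hk, i, j, hij, hjk, (h.2 i j hi hj).mp h1, (h.2 j k hj hk).mp h2⟩
  · rintro l m k ⟨hk, i, j, hij, hjk, h1, h2⟩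
    have hi : i < (l.eraseIdx m).length := by omega
    have hj : j < (l.eraseIdx m).length := by omega
    rw [eraseIdx_getD hi, eraseIdx_getD hj] at h1
    rw [eraseIdx_getD hj, eraseIdx_getD hk] at h2
    exact ⟨unshift_lt hk, _, _, unshift_mono hij, unshift_mono hjk, h1, h2⟩
  · rintro l m k ⟨hm, p, q, hpq, hqm, g1, g2⟩ ⟨hk, i, j, hij, hjk, h1, h2⟩ hkm
    by_cases hjm : j = m
    · -- use p, q, k
      have hpm : p ≠ m := by omega
      have hqm' : q ≠ m := by omega
      refine ⟨shift_lt hm hk hkm, _, _, shift_mono hpq hpm hqm', shift_mono (by omega) hqm' hkm,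
        ?_, ?_⟩
      · rw [shift_getD hm (by omega) hpm, shift_getD hm (by omega) hqm']
        exact g1
      · rw [shift_getD hm (by omega) hqm', shift_getD hm hk hkm]
        subst hjm
        omega
    · by_cases him : i = m
      · -- use p, q, k
        have hpm : p ≠ m := by omega
        have hqm' : q ≠ m := by omega
        refine ⟨shift_lt hm hk hkm, _, _, shift_mono hpq hpm hqm',
          shift_mono (by omega) hqm' hkm, ?_, ?_⟩
        · rw [shift_getD hm (by omega) hpm, shift_getD hm (by omega) hqm']
          exact g1
        · rw [shift_getD hm (by omega) hqm', shift_getD hm hk hkm]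
          subst him
          omega
      · refine ⟨shift_lt hm hk hkm, _, _, shift_mono hij him hjm, shift_mono hjk hjm hkm,
          ?_, ?_⟩
        · rw [shift_getD hm (by omega) him, shift_getD hm (by omega) hjm]
          exact h1
        · rw [shift_getD hm (by omega) hjm, shift_getD hm hk hkm]
          exact h2
  · intro l
    constructor
    · rintro ⟨i, j, k, hij, hjk, hk, h1, h2⟩
      exact ⟨k, hk, i, j, hij, hjk, h1, h2⟩
    · rintro ⟨k, hk, i, j, hij, hjk, h1, h2⟩
      exact ⟨i, j, k, hij, hjk, hk, h1, h2⟩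

theorem midSel_sel : Sel MidSel := by
  constructor
  · exact fun l k h => h.1
  · rintro l l' h k ⟨hk, i, j, hik, hkj, hj, h1, h2⟩
    have hi : i < l.length := by omega
    exact ⟨h.1 ▸ hk, i, j, hik, hkj, h.1 ▸ hj, (h.2 i k hi hk).mp h1, (h.2 k j hk hj).mp h2⟩
  · rintro l m k ⟨hk, i, j, hik, hkj, hj, h1, h2⟩
    have hi : i < (l.eraseIdx m).length := by omega
    rw [eraseIdx_getD hi, eraseIdx_getD hk] at h1
    rw [eraseIdx_getD hk, eraseIdx_getD hj] at h2
    exact ⟨unshift_lt hk, _, _, unshift_mono hik, unshift_mono hkj, unshift_lt hj, h1, h2⟩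
  · rintro l m k ⟨hm, p, r, hpm, hmr, hr, g1, g2⟩ ⟨hk, i, j, hik, hkj, hj, h1, h2⟩ hkm
    by_cases him : i = m
    · -- i = m : use p in place of i
      have hjm : j ≠ m := by omega
      have hpm' : p ≠ m := by omega
      refine ⟨shift_lt hm hk hkm, _, _, shift_mono (by omega) hpm' hkm,
        shift_mono hkj hkm hjm, shift_lt hm hj hjm, ?_, ?_⟩
      · rw [shift_getD hm (by omega) hpm', shift_getD hm hk hkm]
        subst him
        omega
      · rw [shift_getD hm hk hkm, shift_getD hm hj hjm]
        exact h2
    · by_cases hjm : j = m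
      · -- j = m : use r in place of j
        have hrm : r ≠ m := by omega
        refine ⟨shift_lt hm hk hkm, _, _, shift_mono hik him hkm,
          shift_mono (by omega) hkm hrm, shift_lt hm hr hrm, ?_, ?_⟩
        · rw [shift_getD hm (by omega) him, shift_getD hm hk hkm]
          exact h1
        · rw [shift_getD hm hk hkm, shift_getD hm hr hrm]
          subst hjm
          omega
      · refine ⟨shift_lt hm hk hkm, _, _, shift_mono hik him hkm,
          shift_mono hkj hkm hjm, shift_lt hm hj hjm, ?_, ?_⟩
        · rw [shift_getD hm (by omega) him, shift_getD hm hk hkm]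
          exact h1
        · rw [shift_getD hm hk hkm, shift_getD hm hj hjm]
          exact h2
  · intro l
    constructor
    · rintro ⟨i, j, k, hij, hjk, hk, h1, h2⟩
      exact ⟨j, by omega, i, k, hij, hjk, hk, h1, h2⟩
    · rintro ⟨k, hk, i, j, hik, hkj, hj, h1, h2⟩
      exact ⟨i, k, j, hik, hkj, hj, h1, h2⟩

theorem botSel_sel : Sel BotSel := by
  constructor
  · exact fun l k h => h.1
  · rintro l l' h k ⟨hk, i, j, hki, hij, hj, h1, h2⟩
    have hi : i < l.length := by omega
    exact ⟨h.1 ▸ hk, i, j, hki, hij, h.1 ▸ hj, (h.2 k i hk hi).mp h1, (h.2 i j hi hj).mp h2⟩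
  · rintro l m k ⟨hk, i, j, hki, hij, hj, h1, h2⟩
    rw [eraseIdx_getD hk, eraseIdx_getD (show i < (l.eraseIdx m).length by omega)] at h1
    rw [eraseIdx_getD (show i < (l.eraseIdx m).length by omega), eraseIdx_getD hj] at h2
    exact ⟨unshift_lt hk, _, _, unshift_mono hki, unshift_mono hij, unshift_lt hj, h1, h2⟩
  · rintro l m k ⟨hm, p, r, hmp, hpr, hr, g1, g2⟩ ⟨hk, i, j, hki, hij, hj, h1, h2⟩ hkm
    by_cases him : i = m
    · -- i = m : use (k, p, r)
      have hpm : p ≠ m := by omega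
      have hrm : r ≠ m := by omega
      refine ⟨shift_lt hm hk hkm, _, _, shift_mono (by omega) hkm hpm,
        shift_mono hpr hpm hrm, shift_lt hm hr hrm, ?_, ?_⟩
      · rw [shift_getD hm hk hkm, shift_getD hm (by omega) hpm]
        subst him
        omega
      · rw [shift_getD hm (by omega) hpm, shift_getD hm hr hrm]
        exact g2
    · by_cases hjm : j = m
      · -- j = m : use (k, i, p)
        have hpm : p ≠ m := by omega
        refine ⟨shift_lt hm hk hkm, _, _, shift_mono hki hkm him,
          shift_mono (by omega) him hpm, shift_lt hm (by omega) hpm, ?_, ?_⟩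
        · rw [shift_getD hm hk hkm, shift_getD hm (by omega) him]
          exact h1
        · rw [shift_getD hm (by omega) him, shift_getD hm (by omega) hpm]
          subst hjm
          omega
      · refine ⟨shift_lt hm hk hkm, _, _, shift_mono hki hkm him,
          shift_mono hij him hjm, shift_lt hm hj hjm, ?_, ?_⟩
        · rw [shift_getD hm hk hkm, shift_getD hm (by omega) him]
          exact h1
        · rw [shift_getD hm (by omega) him, shift_getD hm hj hjm]
          exact h2
  · intro l
    constructor
    · rintro ⟨i, j, k, hij, hjk, hk, h1, h2⟩
      exact ⟨i, by omega, j, k, hij, hjk, hk, h1, h2⟩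
    · rintro ⟨k, hk, i, j, hki, hij, hj, h1, h2⟩
      exact ⟨k, i, j, hki, hij, hj, h1, h2⟩

end Aux
namespace Aux

theorem repl_symm {a b ρ₁ ρ₂ : SPat} (h : Repl a b ρ₁ ρ₂) : Repl b a ρ₂ ρ₁ := by
  induction h with
  | nil => exact Repl.nil
  | keep x h ih => exact Repl.keep x ih
  | repl x y h ih => exact Repl.repl y x ih

theorem copy123_shape {a : SPat} (h : IsCopy a pat123) :
    ∃ x y z, a = [some x, some y, some z] ∧ x < y ∧ y < z := by
  obtain ⟨hlen, hstar, hiso⟩ := h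
  have h3 : a.length = 3 := by simpa [pat123] using hlen
  obtain ⟨a0, a1, a2, rfl⟩ := List.length_eq_three.mp h3
  have s0 := hstar 0
  have s1 := hstar 1
  have s2 := hstar 2
  simp [pat123] at s0 s1 s2
  rcases a0 with _ | x; · simp at s0
  rcases a1 with _ | y; · simp at s1
  rcases a2 with _ | z; · simp at s2
  refine ⟨x, y, z, rfl, ?_, ?_⟩
  · have := hiso.2 0 1 (by simp [ints]) (by simp [ints])
    simp [pat123, ints] at this
    exact this
  · have := hiso.2 1 2 (by simp [ints]) (by simp [ints])
    simp [pat123, ints] at this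
    exact this

theorem copy12S_shape {a : SPat} (h : IsCopy a pat12S) :
    ∃ x y, a = [some x, some y, none] ∧ x < y := by
  obtain ⟨hlen, hstar, hiso⟩ := h
  have h3 : a.length = 3 := by simpa [pat12S] using hlen
  obtain ⟨a0, a1, a2, rfl⟩ := List.length_eq_three.mp h3
  have s0 := hstar 0
  have s1 := hstar 1
  have s2 := hstar 2
  simp [pat12S] at s0 s1 s2
  rcases a0 with _ | x; · simp at s0
  rcases a1 with _ | y; · simp at s1
  rcases a2 with _ | z
  · refine ⟨x, y, rfl, ?_⟩
    have := hiso.2 0 1 (by simp [ints]) (by simp [ints])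
    simp [pat12S, ints] at this
    exact this
  · simp at s2

theorem copy1S3_shape {a : SPat} (h : IsCopy a pat1S3) :
    ∃ x y, a = [some x, none, some y] ∧ x < y := by
  obtain ⟨hlen, hstar, hiso⟩ := h
  have h3 : a.length = 3 := by simpa [pat1S3] using hlen
  obtain ⟨a0, a1, a2, rfl⟩ := List.length_eq_three.mp h3
  have s0 := hstar 0
  have s1 := hstar 1
  have s2 := hstar 2
  simp [pat1S3] at s0 s1 s2
  rcases a0 with _ | x; · simp at s0
  rcases a2 with _ | y; · simp at s2
  rcases a1 with _ | z
  · refine ⟨x, y, rfl, ?_⟩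
    have := hiso.2 0 1 (by simp [ints]) (by simp [ints])
    simp [pat1S3, ints] at this
    exact this
  · simp at s1

theorem copyS23_shape {a : SPat} (h : IsCopy a patS23) :
    ∃ x y, a = [none, some x, some y] ∧ x < y := by
  obtain ⟨hlen, hstar, hiso⟩ := h
  have h3 : a.length = 3 := by simpa [patS23] using hlen
  obtain ⟨a0, a1, a2, rfl⟩ := List.length_eq_three.mp h3
  have s0 := hstar 0
  have s1 := hstar 1
  have s2 := hstar 2
  simp [patS23] at s0 s1 s2
  rcases a1 with _ | x; · simp at s1
  rcases a2 with _ | y; · simp at s2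
  rcases a0 with _ | z
  · refine ⟨x, y, rfl, ?_⟩
    have := hiso.2 0 1 (by simp [ints]) (by simp [ints])
    simp [patS23, ints] at this
    exact this
  · simp at s0

theorem cs_three {cs : List SPat} (h : cs.length = 3) : ∃ c1 c2 c3, cs = [c1, c2, c3] :=
  List.length_eq_three.mp h

/-- Core decomposition for dropping the `3` of a `123`-copy. -/
theorem core12S {x y z : ℕ} (hxy : x < y) (hyz : y < z) {ρ₁ ρ₂ : SPat} {σ : List ℕ}
    (hRepl : Repl [some x, some y, some z] [some x, some y, none] ρ₁ ρ₂)
    (hIso : OrdIso σ (ints ρ₁)) :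
    ∃ k, TopSel σ k ∧ ints ρ₂ = (ints ρ₁).eraseIdx k := by
  obtain ⟨c0, cs, hlen, _, h1, h2⟩ := repl_weave hRepl
  obtain ⟨c1, c2, c3, rfl⟩ := cs_three (by simpa using hlen)
  have e1 : ints ρ₁ = ints c0 ++ x :: (ints c1 ++ y :: (ints c2 ++ z :: ints c3)) := by
    rw [h1]; simp [weave]
  have e2 : ints ρ₂ = ints c0 ++ x :: (ints c1 ++ y :: (ints c2 ++ ints c3)) := by
    rw [h2]; simp [weave]
  set s := ints c0
  set t := ints c1
  set u := ints c2
  set w := ints c3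
  refine ⟨(s ++ x :: (t ++ y :: u)).length, ?_, ?_⟩
  · have g1 : (ints ρ₁).getD s.length 0 = x := by
      rw [e1]; exact getD_append_length _ _ _
    have g2 : (ints ρ₁).getD (s ++ x :: t).length 0 = y := by
      rw [e1, show s ++ x :: (t ++ y :: (u ++ z :: w)) = (s ++ x :: t) ++ y :: (u ++ z :: w) by
        simp]
      exact getD_append_length _ _ _
    have g3 : (ints ρ₁).getD (s ++ x :: (t ++ y :: u)).length 0 = z := by
      rw [e1, show s ++ x :: (t ++ y :: (u ++ z :: w)) = (s ++ x :: (t ++ y :: u)) ++ z :: w by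
        simp]
      exact getD_append_length _ _ _
    have hlen1 : (ints ρ₁).length = s.length + t.length + u.length + w.length + 3 := by
      rw [e1]; simp only [List.length_append, List.length_cons]; omega
    have hσlen : σ.length = (ints ρ₁).length := hIso.1
    refine ⟨by simp only [hσlen, hlen1, List.length_append, List.length_cons]; omega, s.length, (s ++ x :: t).length,
      by simp only [List.length_append, List.length_cons]; omega, by simp only [List.length_append, List.length_cons]; omega, ?_, ?_⟩
    · rw [hIso.2 _ _ (by simp only [hσlen, hlen1, List.length_append, List.length_cons]; omega) (by simp only [hσlen, hlen1, List.length_append, List.length_cons]; omega), g1, g2]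
      exact hxy
    · rw [hIso.2 _ _ (by simp only [hσlen, hlen1, List.length_append, List.length_cons]; omega) (by simp only [hσlen, hlen1, List.length_append, List.length_cons]; omega), g2, g3]
      exact hyz
  · rw [e2, e1, show s ++ x :: (t ++ y :: (u ++ z :: w)) = (s ++ x :: (t ++ y :: u)) ++ z :: w by
      simp, eraseIdx_append_length]
    simp

/-- Core decomposition for dropping the `2` of a `123`-copy. -/
theorem core1S3 {x y z : ℕ} (hxy : x < y) (hyz : y < z) {ρ₁ ρ₂ : SPat} {σ : List ℕ}
    (hRepl : Repl [some x, some y, some z] [some x, none, some z] ρ₁ ρ₂)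
    (hIso : OrdIso σ (ints ρ₁)) :
    ∃ k, MidSel σ k ∧ ints ρ₂ = (ints ρ₁).eraseIdx k := by
  obtain ⟨c0, cs, hlen, _, h1, h2⟩ := repl_weave hRepl
  obtain ⟨c1, c2, c3, rfl⟩ := cs_three (by simpa using hlen)
  have e1 : ints ρ₁ = ints c0 ++ x :: (ints c1 ++ y :: (ints c2 ++ z :: ints c3)) := by
    rw [h1]; simp [weave]
  have e2 : ints ρ₂ = ints c0 ++ x :: (ints c1 ++ (ints c2 ++ z :: ints c3)) := by
    rw [h2]; simp [weave]
  set s := ints c0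
  set t := ints c1
  set u := ints c2
  set w := ints c3
  refine ⟨(s ++ x :: t).length, ?_, ?_⟩
  · have g1 : (ints ρ₁).getD s.length 0 = x := by
      rw [e1]; exact getD_append_length _ _ _
    have g2 : (ints ρ₁).getD (s ++ x :: t).length 0 = y := by
      rw [e1, show s ++ x :: (t ++ y :: (u ++ z :: w)) = (s ++ x :: t) ++ y :: (u ++ z :: w) by
        simp]
      exact getD_append_length _ _ _
    have g3 : (ints ρ₁).getD (s ++ x :: (t ++ y :: u)).length 0 = z := by
      rw [e1, show s ++ x :: (t ++ y :: (u ++ z :: w)) = (s ++ x :: (t ++ y :: u)) ++ z :: w by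
        simp]
      exact getD_append_length _ _ _
    have hlen1 : (ints ρ₁).length = s.length + t.length + u.length + w.length + 3 := by
      rw [e1]; simp only [List.length_append, List.length_cons]; omega
    have hσlen : σ.length = (ints ρ₁).length := hIso.1
    refine ⟨by simp only [hσlen, hlen1, List.length_append, List.length_cons]; omega, s.length, (s ++ x :: (t ++ y :: u)).length,
      by simp only [List.length_append, List.length_cons]; omega, by simp only [List.length_append, List.length_cons]; omega, by simp only [hσlen, hlen1, List.length_append, List.length_cons]; omega, ?_, ?_⟩
    · rw [hIso.2 _ _ (by simp only [hσlen, hlen1, List.length_append, List.length_cons]; omega) (by simp only [hσlen, hlen1, List.length_append, List.length_cons]; omega), g1, g2]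
      exact hxy
    · rw [hIso.2 _ _ (by simp only [hσlen, hlen1, List.length_append, List.length_cons]; omega) (by simp only [hσlen, hlen1, List.length_append, List.length_cons]; omega), g2, g3]
      exact hyz
  · rw [e2, e1, show s ++ x :: (t ++ y :: (u ++ z :: w)) = (s ++ x :: t) ++ y :: (u ++ z :: w) by
      simp, eraseIdx_append_length]
    simp

/-- Core decomposition for dropping the `1` of a `123`-copy. -/
theorem coreS23 {x y z : ℕ} (hxy : x < y) (hyz : y < z) {ρ₁ ρ₂ : SPat} {σ : List ℕ}
    (hRepl : Repl [some x, some y, some z] [none, some y, some z] ρ₁ ρ₂)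
    (hIso : OrdIso σ (ints ρ₁)) :
    ∃ k, BotSel σ k ∧ ints ρ₂ = (ints ρ₁).eraseIdx k := by
  obtain ⟨c0, cs, hlen, _, h1, h2⟩ := repl_weave hRepl
  obtain ⟨c1, c2, c3, rfl⟩ := cs_three (by simpa using hlen)
  have e1 : ints ρ₁ = ints c0 ++ x :: (ints c1 ++ y :: (ints c2 ++ z :: ints c3)) := by
    rw [h1]; simp [weave]
  have e2 : ints ρ₂ = ints c0 ++ (ints c1 ++ y :: (ints c2 ++ z :: ints c3)) := by
    rw [h2]; simp [weave]
  set s := ints c0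
  set t := ints c1
  set u := ints c2
  set w := ints c3
  refine ⟨s.length, ?_, ?_⟩
  · have g1 : (ints ρ₁).getD s.length 0 = x := by
      rw [e1]; exact getD_append_length _ _ _
    have g2 : (ints ρ₁).getD (s ++ x :: t).length 0 = y := by
      rw [e1, show s ++ x :: (t ++ y :: (u ++ z :: w)) = (s ++ x :: t) ++ y :: (u ++ z :: w) by
        simp]
      exact getD_append_length _ _ _
    have g3 : (ints ρ₁).getD (s ++ x :: (t ++ y :: u)).length 0 = z := by
      rw [e1, show s ++ x :: (t ++ y :: (u ++ z :: w)) = (s ++ x :: (t ++ y :: u)) ++ z :: w by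
        simp]
      exact getD_append_length _ _ _
    have hlen1 : (ints ρ₁).length = s.length + t.length + u.length + w.length + 3 := by
      rw [e1]; simp only [List.length_append, List.length_cons]; omega
    have hσlen : σ.length = (ints ρ₁).length := hIso.1
    refine ⟨by simp only [hσlen, hlen1, List.length_append, List.length_cons]; omega, (s ++ x :: t).length,
      (s ++ x :: (t ++ y :: u)).length,
      by simp only [List.length_append, List.length_cons]; omega, by simp only [List.length_append, List.length_cons]; omega, by simp only [hσlen, hlen1, List.length_append, List.length_cons]; omega, ?_, ?_⟩
    · rw [hIso.2 _ _ (by simp only [hσlen, hlen1, List.length_append, List.length_cons]; omega) (by simp only [hσlen, hlen1, List.length_append, List.length_cons]; omega), g1, g2]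
      exact hxy
    · rw [hIso.2 _ _ (by simp only [hσlen, hlen1, List.length_append, List.length_cons]; omega) (by simp only [hσlen, hlen1, List.length_append, List.length_cons]; omega), g2, g3]
      exact hyz
  · rw [e2, e1, show s ++ x :: (t ++ y :: (u ++ z :: w)) = s ++ x :: (t ++ y :: (u ++ z :: w))
      from rfl]
    rw [show (s ++ x :: (t ++ y :: (u ++ z :: w))).eraseIdx s.length
        = s ++ (t ++ y :: (u ++ z :: w)) from eraseIdx_append_length _ _ _]

theorem finish_renumber {σ τ L1 L2 : List ℕ} {k : ℕ} (hσ : σ.Nodup) (hτ : IsPermList τ)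
    (h1 : OrdIso σ L1) (h2 : OrdIso L2 τ) (he : L2 = L1.eraseIdx k) :
    τ = renumber (σ.eraseIdx k) :=
  eq_renumber_of_ordIso ((σ.eraseIdx_sublist k).nodup hσ) hτ
    (ordIso_trans (ordIso_eraseIdx h1 k) (he ▸ h2))

end Aux
namespace Aux

theorem step_fwd_12S {σ τ : List ℕ} (hσ : σ.Nodup) (h : IsResult pat123 pat12S σ τ) :
    IsPermList τ ∧ ∃ k, TopSel σ k ∧ τ = renumber (σ.eraseIdx k) := by
  obtain ⟨ρ₁, ρ₂, a, b, _, hIso1, hCa, _, hCb, _, hAgr, hRepl, hPτ, hIso2⟩ := h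
  obtain ⟨x, y, z, rfl, hxy, hyz⟩ := copy123_shape hCa
  obtain ⟨u, v, rfl, huv⟩ := copy12S_shape hCb
  have e0 := hAgr 0 0 1 (by simp [pat123]) (by simp [pat12S])
  have e1 := hAgr 1 1 2 (by simp [pat123]) (by simp [pat12S])
  simp only [List.getD_cons_zero, List.getD_cons_succ, Option.some.injEq] at e0 e1
  subst e0 e1
  obtain ⟨k, hsel, he⟩ := core12S hxy hyz hRepl hIso1
  exact ⟨hPτ, k, hsel, finish_renumber hσ hPτ hIso1 hIso2 he⟩

theorem step_bwd_12S {σ τ : List ℕ} (hσ : IsPermList σ) (h : IsResult pat12S pat123 σ τ) :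
    IsPermList τ ∧ ∃ k, TopSel τ k ∧ σ = renumber (τ.eraseIdx k) := by
  obtain ⟨ρ₁, ρ₂, a, b, _, hIso1, hCa, _, hCb, _, hAgr, hRepl, hPτ, hIso2⟩ := h
  obtain ⟨u, v, rfl, huv⟩ := copy12S_shape hCa
  obtain ⟨p, q, r, rfl, hpq, hqr⟩ := copy123_shape hCb
  have e0 := hAgr 0 0 1 (by simp [pat12S]) (by simp [pat123])
  have e1 := hAgr 1 1 2 (by simp [pat12S]) (by simp [pat123])
  simp only [List.getD_cons_zero, List.getD_cons_succ, Option.some.injEq] at e0 e1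
  subst e0 e1
  obtain ⟨k, hsel, he⟩ := core12S hpq hqr (repl_symm hRepl) (ordIso_symm hIso2)
  exact ⟨hPτ, k, hsel,
    finish_renumber (permList_nodup hPτ) hσ (ordIso_symm hIso2) (ordIso_symm hIso1) he⟩

theorem step_fwd_1S3 {σ τ : List ℕ} (hσ : σ.Nodup) (h : IsResult pat123 pat1S3 σ τ) :
    IsPermList τ ∧ ∃ k, MidSel σ k ∧ τ = renumber (σ.eraseIdx k) := by
  obtain ⟨ρ₁, ρ₂, a, b, _, hIso1, hCa, _, hCb, _, hAgr, hRepl, hPτ, hIso2⟩ := h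
  obtain ⟨x, y, z, rfl, hxy, hyz⟩ := copy123_shape hCa
  obtain ⟨u, v, rfl, huv⟩ := copy1S3_shape hCb
  have e0 := hAgr 0 0 1 (by simp [pat123]) (by simp [pat1S3])
  have e1 := hAgr 2 2 3 (by simp [pat123]) (by simp [pat1S3])
  simp only [List.getD_cons_zero, List.getD_cons_succ, Option.some.injEq] at e0 e1
  subst e0 e1
  obtain ⟨k, hsel, he⟩ := core1S3 hxy hyz hRepl hIso1
  exact ⟨hPτ, k, hsel, finish_renumber hσ hPτ hIso1 hIso2 he⟩

theorem step_bwd_1S3 {σ τ : List ℕ} (hσ : IsPermList σ) (h : IsResult pat1S3 pat123 σ τ) :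
    IsPermList τ ∧ ∃ k, MidSel τ k ∧ σ = renumber (τ.eraseIdx k) := by
  obtain ⟨ρ₁, ρ₂, a, b, _, hIso1, hCa, _, hCb, _, hAgr, hRepl, hPτ, hIso2⟩ := h
  obtain ⟨u, v, rfl, huv⟩ := copy1S3_shape hCa
  obtain ⟨p, q, r, rfl, hpq, hqr⟩ := copy123_shape hCb
  have e0 := hAgr 0 0 1 (by simp [pat1S3]) (by simp [pat123])
  have e1 := hAgr 2 2 3 (by simp [pat1S3]) (by simp [pat123])
  simp only [List.getD_cons_zero, List.getD_cons_succ, Option.some.injEq] at e0 e1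
  subst e0 e1
  obtain ⟨k, hsel, he⟩ := core1S3 hpq hqr (repl_symm hRepl) (ordIso_symm hIso2)
  exact ⟨hPτ, k, hsel,
    finish_renumber (permList_nodup hPτ) hσ (ordIso_symm hIso2) (ordIso_symm hIso1) he⟩

theorem step_fwd_S23 {σ τ : List ℕ} (hσ : σ.Nodup) (h : IsResult pat123 patS23 σ τ) :
    IsPermList τ ∧ ∃ k, BotSel σ k ∧ τ = renumber (σ.eraseIdx k) := by
  obtain ⟨ρ₁, ρ₂, a, b, _, hIso1, hCa, _, hCb, _, hAgr, hRepl, hPτ, hIso2⟩ := h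
  obtain ⟨x, y, z, rfl, hxy, hyz⟩ := copy123_shape hCa
  obtain ⟨u, v, rfl, huv⟩ := copyS23_shape hCb
  have e0 := hAgr 1 1 2 (by simp [pat123]) (by simp [patS23])
  have e1 := hAgr 2 2 3 (by simp [pat123]) (by simp [patS23])
  simp only [List.getD_cons_zero, List.getD_cons_succ, Option.some.injEq] at e0 e1
  subst e0 e1
  obtain ⟨k, hsel, he⟩ := coreS23 hxy hyz hRepl hIso1
  exact ⟨hPτ, k, hsel, finish_renumber hσ hPτ hIso1 hIso2 he⟩

theorem step_bwd_S23 {σ τ : List ℕ} (hσ : IsPermList σ) (h : IsResult patS23 pat123 σ τ) :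
    IsPermList τ ∧ ∃ k, BotSel τ k ∧ σ = renumber (τ.eraseIdx k) := by
  obtain ⟨ρ₁, ρ₂, a, b, _, hIso1, hCa, _, hCb, _, hAgr, hRepl, hPτ, hIso2⟩ := h
  obtain ⟨u, v, rfl, huv⟩ := copyS23_shape hCa
  obtain ⟨p, q, r, rfl, hpq, hqr⟩ := copy123_shape hCb
  have e0 := hAgr 1 1 2 (by simp [patS23]) (by simp [pat123])
  have e1 := hAgr 2 2 3 (by simp [patS23]) (by simp [pat123])
  simp only [List.getD_cons_zero, List.getD_cons_succ, Option.some.injEq] at e0 e1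
  subst e0 e1
  obtain ⟨k, hsel, he⟩ := coreS23 hpq hqr (repl_symm hRepl) (ordIso_symm hIso2)
  exact ⟨hPτ, k, hsel,
    finish_renumber (permList_nodup hPτ) hσ (ordIso_symm hIso2) (ordIso_symm hIso1) he⟩

theorem main_aux {P : List ℕ → ℕ → Prop} (hP : Sel P) {β : SPat}
    (fwd : ∀ {σ τ : List ℕ}, σ.Nodup → IsResult pat123 β σ τ →
      IsPermList τ ∧ ∃ k, P σ k ∧ τ = renumber (σ.eraseIdx k))
    (bwd : ∀ {σ τ : List ℕ}, IsPermList σ → IsResult β pat123 σ τ →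
      IsPermList τ ∧ ∃ k, P τ k ∧ σ = renumber (τ.eraseIdx k))
    (π τ : List ℕ) (hπ : IsPermList π)
    (hchain : Relation.ReflTransGen (IsResult pat123 β) π τ) (hav : ¬ contains123 τ) :
    PermEquiv pat123 β π τ ∧
      ∀ σ : List ℕ, IsPermList σ → PermEquiv pat123 β π σ →
        τ.length ≤ σ.length ∧ (σ.length = τ.length → σ = τ) := by
  have inv : ∀ {σ : List ℕ}, PermEquiv pat123 β π σ → IsPermList σ ∧ Kern P σ = Kern P π := by
    intro σ h
    induction h with
    | refl => exact ⟨hπ, rfl⟩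
    | tail hab hstep ih =>
      obtain ⟨hb, hkb⟩ := ih
      rcases hstep with hf | hb2
      · obtain ⟨hc, k, hk, rfl⟩ := fwd (permList_nodup hb) hf
        exact ⟨hc, by rw [kern_step hP (permList_nodup hb) hk, hkb]⟩
      · obtain ⟨hc, k, hk, heq⟩ := bwd hb hb2
        refine ⟨hc, ?_⟩
        rw [← hkb, heq, kern_step hP (permList_nodup hc) hk]
  have hEquivτ : PermEquiv pat123 β π τ := Relation.ReflTransGen.mono (fun _ _ h => Or.inl h) π τ hchain
  obtain ⟨hτ, hkτ⟩ := inv hEquivτ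
  have hkern : Kern P τ = τ := kern_of_avoid hP hτ hav
  refine ⟨hEquivτ, fun σ hσ hσeq => ?_⟩
  obtain ⟨_, hkσ⟩ := inv hσeq
  have hτσ : τ = Kern P σ := by rw [hkσ, ← hkτ, hkern]
  constructor
  · rw [hτσ]
    exact kern_length_le P σ
  · intro hl
    have : (Kern P σ).length = σ.length := by rw [← hτσ, hl]
    rw [hτσ]
    exact (kern_eq_of_length hP hσ this).symm

end Aux


/-- for `β ∈ {12★, 1★3, ★23}`, if `τ` is obtained from `π` by
repeatedly applying `123 → β` to arbitrarily chosen copies of `123` until the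
result avoids `123`, then `τ` is the primitive permutation of `π` under
`123 ↔ β`: `π ≡ τ`, every permutation equivalent to `π` has length at least
`|τ|`, and the only equivalent permutation of that length is `τ` itself (so the
result does not depend on the choices made). -/
theorem dropOnly_primitive :
    ∀ β ∈ ([pat12S, pat1S3, patS23] : List SPat),
    ∀ π τ : List ℕ, IsPermList π →
    Relation.ReflTransGen (IsResult pat123 β) π τ → ¬ contains123 τ →
    PermEquiv pat123 β π τ ∧
      ∀ σ : List ℕ, IsPermList σ → PermEquiv pat123 β π σ →
        τ.length ≤ σ.length ∧ (σ.length = τ.length → σ = τ) := by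
  intro β hβ π τ hπ hchain hav
  simp only [List.mem_cons, List.not_mem_nil, or_false] at hβ
  rcases hβ with rfl | rfl | rfl
  · exact Aux.main_aux Aux.topSel_sel (fun h₁ h₂ => Aux.step_fwd_12S h₁ h₂)
      (fun h₁ h₂ => Aux.step_bwd_12S h₁ h₂) π τ hπ hchain hav
  · exact Aux.main_aux Aux.midSel_sel (fun h₁ h₂ => Aux.step_fwd_1S3 h₁ h₂)
      (fun h₁ h₂ => Aux.step_bwd_1S3 h₁ h₂) π τ hπ hchain hav
  · exact Aux.main_aux Aux.botSel_sel (fun h₁ h₂ => Aux.step_fwd_S23 h₁ h₂)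
      (fun h₁ h₂ => Aux.step_bwd_S23 h₁ h₂) π τ hπ hchain hav
end

section
/- If two permutations π and σ of equal length are equivalent under the bidirectional replacement 123 ↔ 132 (here 123 and 132 are ★-patterns containing no ★, so each such replacement preserves length), then π and σ are equivalent under the bidirectional replacement 123 ↔ 13★. -/
section Helpers

open List

lemma ints_append (u v : SPat) : ints (u ++ v) = ints u ++ ints v := by
  simp [ints]

lemma ints_cons_some (x : ℕ) (u : SPat) : ints (some x :: u) = x :: ints u := by
  simp [ints]

lemma ints_cons_none (u : SPat) : ints (none :: u) = ints u := by
  simp [ints]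

lemma ints_emb (l : List ℕ) : ints (l.map some) = l := by
  induction l with
  | nil => rfl
  | cons a t ih => simp [ints]

lemma OrdIso.symm {u v : List ℕ} (h : OrdIso u v) : OrdIso v u := by
  obtain ⟨hl, h⟩ := h
  exact ⟨hl.symm, fun i j hi hj => (h i j (hl ▸ hi) (hl ▸ hj)).symm⟩

lemma OrdIso.trans {u v w : List ℕ} (h1 : OrdIso u v) (h2 : OrdIso v w) : OrdIso u w := by
  obtain ⟨hl1, h1⟩ := h1
  obtain ⟨hl2, h2⟩ := h2
  exact ⟨hl1.trans hl2, fun i j hi hj =>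
    (h1 i j hi hj).trans (h2 i j (hl1 ▸ hi) (hl1 ▸ hj))⟩

lemma ordIso_scale (l : List ℕ) : OrdIso l (l.map (fun x => 2 * x)) := by
  refine ⟨by simp, fun i j hi hj => ?_⟩
  rw [List.getD_eq_getElem _ _ hi, List.getD_eq_getElem _ _ hj,
    List.getD_eq_getElem _ _ (by simpa using hi), List.getD_eq_getElem _ _ (by simpa using hj)]
  simp

end Helpers
section Std

def rnk (M : List ℕ) (x : ℕ) : ℕ := (M.filter (fun y => decide (y < x))).length + 1

def std (M : List ℕ) : List ℕ := M.map (rnk M)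

lemma flen_mono (M : List ℕ) {x y : ℕ} (h : x ≤ y) :
    (M.filter (fun z => decide (z < x))).length ≤ (M.filter (fun z => decide (z < y))).length := by
  induction M with
  | nil => simp
  | cons a t ih =>
    by_cases h1 : a < x <;> by_cases h2 : a < y <;>
      simp [List.filter_cons, h1, h2] <;> omega

lemma flen_strict (M : List ℕ) {x y : ℕ} (hx : x ∈ M) (h : x < y) :
    (M.filter (fun z => decide (z < x))).length < (M.filter (fun z => decide (z < y))).length := by
  induction M with
  | nil => simp at hx
  | cons a t ih =>
    rcases List.mem_cons.1 hx with rfl | hx'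
    · have := flen_mono t (le_of_lt h)
      simp [List.filter_cons, h, lt_irrefl]
      omega
    · have := ih hx'
      by_cases h1 : a < x <;> by_cases h2 : a < y <;>
        simp [List.filter_cons, h1, h2] <;> omega

lemma flen_lt_length (M : List ℕ) {x : ℕ} (hx : x ∈ M) :
    (M.filter (fun z => decide (z < x))).length < M.length := by
  induction M with
  | nil => simp at hx
  | cons a t ih =>
    rcases List.mem_cons.1 hx with rfl | hx'
    · have := List.length_filter_le (fun z => decide (z < x)) t
      simp [List.filter_cons, lt_irrefl]
      omega
    · have := ih hx'
      by_cases h1 : a < x <;> simp only [List.filter_cons, h1, decide_true, decide_false, Bool.false_eq_true, ↓reduceIte, List.length_cons] <;> omega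

lemma rnk_lt_rnk {M : List ℕ} {x y : ℕ} (hx : x ∈ M) (hy : y ∈ M) :
    x < y ↔ rnk M x < rnk M y := by
  constructor
  · intro h; exact Nat.add_lt_add_right (flen_strict M hx h) 1
  · intro h
    by_contra hc
    rcases Nat.lt_or_ge y x with h' | h'
    · have := flen_strict M hy h'
      unfold rnk at h; omega
    · have : x = y := by omega
      subst this; omega

lemma ordIso_std (M : List ℕ) : OrdIso M (std M) := by
  refine ⟨by simp [std], fun i j hi hj => ?_⟩
  have hi' : i < (std M).length := by simpa [std] using hi
  have hj' : j < (std M).length := by simpa [std] using hj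
  rw [List.getD_eq_getElem _ _ hi, List.getD_eq_getElem _ _ hj,
    List.getD_eq_getElem _ _ hi', List.getD_eq_getElem _ _ hj']
  simp only [std, List.getElem_map]
  exact rnk_lt_rnk (M.getElem_mem hi) (M.getElem_mem hj)

lemma isPermList_std (M : List ℕ) (h : M.Nodup) : IsPermList (std M) := by
  have hnd : (std M).Nodup := by
    refine List.Nodup.map_on ?_ h
    intro x hx y hy hxy
    by_contra hne
    rcases Nat.lt_or_ge x y with h' | h'
    · have := (rnk_lt_rnk hx hy).1 h'; omega
    · have h'' : y < x := by omega
      have := (rnk_lt_rnk hy hx).1 h''; omega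
  have hsub : std M ⊆ List.range' 1 (std M).length := by
    intro z hz
    rcases List.mem_map.1 hz with ⟨x, hx, rfl⟩
    have h1 : 1 ≤ rnk M x := by unfold rnk; omega
    have h2 : rnk M x ≤ M.length := by
      have := flen_lt_length M hx
      unfold rnk; omega
    have : (std M).length = M.length := by simp [std]
    rw [List.mem_range']
    refine ⟨rnk M x - 1, by omega, by omega⟩
  have hsp : List.Subperm (std M) (List.range' 1 (std M).length) := List.subperm_of_subset hnd hsub
  exact hsp.perm_of_length_le (by simp)

end Std
section ReplLemmas

lemma repl_nil_eq {a b ρ₁ ρ₂ : SPat} (h : Repl a b ρ₁ ρ₂) (ha : a = []) (hb : b = []) :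
    ρ₁ = ρ₂ := by
  induction h with
  | nil => rfl
  | keep x h ih => rw [ih ha hb]
  | repl x y h ih => simp at ha

lemma repl_cons_elim {a b ρ₁ ρ₂ : SPat} (h : Repl a b ρ₁ ρ₂) :
    ∀ x a' y b', a = x :: a' → b = y :: b' →
    ∃ A ρ₁' ρ₂', ρ₁ = A ++ x :: ρ₁' ∧ ρ₂ = A ++ y :: ρ₂' ∧ Repl a' b' ρ₁' ρ₂' := by
  induction h with
  | nil => intro x a' y b' hx; simp at hx
  | keep z h ih =>
    intro x a' y b' hx hy
    obtain ⟨A, u, v, h1, h2, h3⟩ := ih x a' y b' hx hy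
    exact ⟨z :: A, u, v, by simp [h1], by simp [h2], h3⟩
  | repl z w h ih =>
    intro x a' y b' hx hy
    obtain ⟨rfl, rfl⟩ : z = x ∧ _ = a' := by simpa using hx
    obtain ⟨rfl, rfl⟩ : w = y ∧ _ = b' := by simpa using hy
    exact ⟨[], _, _, rfl, rfl, h⟩

lemma repl3_decomp {x1 x2 x3 y1 y2 y3 : Option ℕ} {ρ₁ ρ₂ : SPat}
    (h : Repl [x1, x2, x3] [y1, y2, y3] ρ₁ ρ₂) :
    ∃ A B C D : SPat,
      ρ₁ = A ++ x1 :: (B ++ x2 :: (C ++ x3 :: D)) ∧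
      ρ₂ = A ++ y1 :: (B ++ y2 :: (C ++ y3 :: D)) := by
  obtain ⟨A, u1, v1, rfl, rfl, h1⟩ := repl_cons_elim h x1 _ y1 _ rfl rfl
  obtain ⟨B, u2, v2, rfl, rfl, h2⟩ := repl_cons_elim h1 x2 _ y2 _ rfl rfl
  obtain ⟨C, u3, v3, rfl, rfl, h3⟩ := repl_cons_elim h2 x3 _ y3 _ rfl rfl
  obtain rfl := repl_nil_eq h3 rfl rfl
  exact ⟨A, B, C, u3, rfl, rfl⟩

lemma repl_keep_append {a b : SPat} (A : SPat) {ρ₁ ρ₂ : SPat} (h : Repl a b ρ₁ ρ₂) :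
    Repl a b (A ++ ρ₁) (A ++ ρ₂) := by
  induction A with
  | nil => exact h
  | cons x t ih => exact Repl.keep x ih

lemma repl_nil_self (D : SPat) : Repl [] [] D D := by
  induction D with
  | nil => exact Repl.nil
  | cons x t ih => exact Repl.keep x ih

lemma repl3_intro (x1 x2 x3 y1 y2 y3 : Option ℕ) (A B C D : SPat) :
    Repl [x1, x2, x3] [y1, y2, y3]
      (A ++ x1 :: (B ++ x2 :: (C ++ x3 :: D))) (A ++ y1 :: (B ++ y2 :: (C ++ y3 :: D))) :=
  repl_keep_append A (Repl.repl x1 y1 (repl_keep_append B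
    (Repl.repl x2 y2 (repl_keep_append C (Repl.repl x3 y3 (repl_nil_self D))))))

end ReplLemmas

section CopyLemmas

lemma ordIso_triple {x y z a b c : ℕ} (h1 : x < y) (h2 : y < z) (g1 : a < b) (g2 : b < c) :
    OrdIso [x, y, z] [a, b, c] := by
  refine ⟨rfl, fun i j hi hj => ?_⟩
  simp at hi hj
  interval_cases i <;> interval_cases j <;> simp <;> omega

lemma ordIso_pair {x y a b : ℕ} (h1 : x < y) (g1 : a < b) : OrdIso [x, y] [a, b] := by
  refine ⟨rfl, fun i j hi hj => ?_⟩
  simp at hi hj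
  interval_cases i <;> interval_cases j <;> simp <;> omega

lemma isCopy_123 {x y z : ℕ} (h1 : x < y) (h2 : y < z) :
    IsCopy [some x, some y, some z] pat123 := by
  refine ⟨rfl, fun i => ?_, ?_⟩
  · rcases i with _ | _ | _ | i <;> simp [pat123]
  · simpa [ints, pat123] using ordIso_triple h1 h2 (by norm_num : (1:ℕ) < 2) (by norm_num)

lemma isCopy_13S {x y : ℕ} (h1 : x < y) :
    IsCopy [some x, some y, none] pat13S := by
  refine ⟨rfl, fun i => ?_, ?_⟩
  · rcases i with _ | _ | _ | i <;> simp [pat13S]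
  · simpa [ints, pat13S] using ordIso_pair h1 (by norm_num : (1:ℕ) < 3)

lemma isCopy_123_elim {a : SPat} (h : IsCopy a pat123) :
    ∃ x y z : ℕ, a = [some x, some y, some z] ∧ x < y ∧ y < z := by
  obtain ⟨hl, hst, hiso⟩ := h
  have hl3 : a.length = 3 := by simpa [pat123] using hl
  match a, hl3 with
  | [a0, a1, a2], _ =>
    have h0 := hst 0
    have h1 := hst 1
    have h2 := hst 2
    simp [pat123] at h0 h1 h2
    obtain ⟨x, rfl⟩ := Option.ne_none_iff_exists'.1 h0
    obtain ⟨y, rfl⟩ := Option.ne_none_iff_exists'.1 h1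
    obtain ⟨z, rfl⟩ := Option.ne_none_iff_exists'.1 h2
    refine ⟨x, y, z, rfl, ?_, ?_⟩
    · have := (hiso.2 0 1 (by simp [ints]) (by simp [ints]))
      simpa [ints, pat123] using this.2
    · have := (hiso.2 1 2 (by simp [ints]) (by simp [ints]))
      simpa [ints, pat123] using this.2

lemma isCopy_132_elim {a : SPat} (h : IsCopy a pat132) :
    ∃ x y z : ℕ, a = [some x, some z, some y] ∧ x < y ∧ y < z := by
  obtain ⟨hl, hst, hiso⟩ := h
  have hl3 : a.length = 3 := by simpa [pat132] using hl
  match a, hl3 with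
  | [a0, a1, a2], _ =>
    have h0 := hst 0
    have h1 := hst 1
    have h2 := hst 2
    simp [pat132] at h0 h1 h2
    obtain ⟨x, rfl⟩ := Option.ne_none_iff_exists'.1 h0
    obtain ⟨z, rfl⟩ := Option.ne_none_iff_exists'.1 h1
    obtain ⟨y, rfl⟩ := Option.ne_none_iff_exists'.1 h2
    refine ⟨x, y, z, rfl, ?_, ?_⟩
    · have := (hiso.2 0 2 (by simp [ints]) (by simp [ints]))
      simpa [ints, pat132] using this.2
    · have := (hiso.2 2 1 (by simp [ints]) (by simp [ints]))
      simpa [ints, pat132] using this.2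

end CopyLemmas
section Extract

lemma ints_decomp (A B C D : SPat) (p q r : ℕ) :
    ints (A ++ some p :: (B ++ some q :: (C ++ some r :: D))) =
      ints A ++ p :: (ints B ++ q :: (ints C ++ r :: ints D)) := by
  simp [ints_append, ints_cons_some]

lemma extractA {τ υ : List ℕ} (h : IsResult pat123 pat132 τ υ) :
    ∃ (LA LB LC LD : List ℕ) (p q r : ℕ),
      (LA ++ p :: (LB ++ q :: (LC ++ r :: LD))).Nodup ∧
      (∀ x ∈ LA ++ p :: (LB ++ q :: (LC ++ r :: LD)), 0 < x) ∧
      p < q ∧ q < r ∧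
      OrdIso τ (LA ++ p :: (LB ++ q :: (LC ++ r :: LD))) ∧
      OrdIso (LA ++ p :: (LB ++ r :: (LC ++ q :: LD))) υ ∧ IsPermList υ := by
  obtain ⟨ρ₁, ρ₂, a, b, hs1, hτ, hcA, hsb, hcB, hsub, hagr, hrepl, hυP, hυ⟩ := h
  obtain ⟨p, q, r, rfl, hpq, hqr⟩ := isCopy_123_elim hcA
  have hb3 : b.length = 3 := by simpa [pat132] using hcB.1
  match b, hb3 with
  | [b0, b1, b2], _ =>
    have e0 : b0 = some p := by
      have := hagr 0 0 1 (by simp [pat123]) (by simp [pat132]); simpa using this.symm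
    have e1 : b1 = some r := by
      have := hagr 2 1 3 (by simp [pat123]) (by simp [pat132]); simpa using this.symm
    have e2 : b2 = some q := by
      have := hagr 1 2 2 (by simp [pat123]) (by simp [pat132]); simpa using this.symm
    subst e0 e1 e2
    obtain ⟨A, B, C, D, rfl, rfl⟩ := repl3_decomp hrepl
    refine ⟨ints A, ints B, ints C, ints D, p, q, r, ?_, ?_, hpq, hqr, ?_, ?_, hυP⟩
    · have := hs1.1; rwa [ints_decomp] at this
    · have := hs1.2; rwa [ints_decomp] at this
    · rwa [ints_decomp] at hτ
    · rwa [ints_decomp] at hυ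

lemma extractB {τ υ : List ℕ} (h : IsResult pat132 pat123 τ υ) :
    ∃ (LA LB LC LD : List ℕ) (p q r : ℕ),
      (LA ++ p :: (LB ++ r :: (LC ++ q :: LD))).Nodup ∧
      (∀ x ∈ LA ++ p :: (LB ++ r :: (LC ++ q :: LD)), 0 < x) ∧
      p < q ∧ q < r ∧
      OrdIso τ (LA ++ p :: (LB ++ r :: (LC ++ q :: LD))) ∧
      OrdIso (LA ++ p :: (LB ++ q :: (LC ++ r :: LD))) υ ∧ IsPermList υ := by
  obtain ⟨ρ₁, ρ₂, a, b, hs1, hτ, hcA, hsb, hcB, hsub, hagr, hrepl, hυP, hυ⟩ := h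
  obtain ⟨p, q, r, rfl, hpq, hqr⟩ := isCopy_132_elim hcA
  have hb3 : b.length = 3 := by simpa [pat123] using hcB.1
  match b, hb3 with
  | [b0, b1, b2], _ =>
    have e0 : b0 = some p := by
      have := hagr 0 0 1 (by simp [pat132]) (by simp [pat123]); simpa using this.symm
    have e1 : b1 = some q := by
      have := hagr 2 1 2 (by simp [pat132]) (by simp [pat123]); simpa using this.symm
    have e2 : b2 = some r := by
      have := hagr 1 2 3 (by simp [pat132]) (by simp [pat123]); simpa using this.symm
    subst e0 e1 e2
    obtain ⟨A, B, C, D, rfl, rfl⟩ := repl3_decomp hrepl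
    refine ⟨ints A, ints B, ints C, ints D, p, q, r, ?_, ?_, hpq, hqr, ?_, ?_, hυP⟩
    · have := hs1.1; rwa [ints_decomp] at this
    · have := hs1.2; rwa [ints_decomp] at this
    · rwa [ints_decomp] at hτ
    · rwa [ints_decomp] at hυ

end Extract
section Key

private lemma perm_help (A B C D : List ℕ) (u v x mm : ℕ) :
    (A ++ u :: (B ++ mm :: (C ++ v :: x :: D))).Perm
      (mm :: (A ++ u :: (B ++ x :: (C ++ v :: D)))) := by
  have e1 : A ++ u :: (B ++ mm :: (C ++ v :: x :: D))
      = (A ++ u :: B) ++ mm :: (C ++ v :: x :: D) := by simp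
  have h2 : ((A ++ u :: B) ++ mm :: (C ++ v :: x :: D)).Perm
      (mm :: ((A ++ u :: B) ++ (C ++ v :: x :: D))) := List.perm_middle
  have h3 : (C ++ v :: x :: D).Perm (x :: (C ++ v :: D)) := by
    have := List.perm_middle (a := x) (l₁ := C ++ [v]) (l₂ := D)
    simpa using this
  have h4 : ((A ++ u :: B) ++ (C ++ v :: x :: D)).Perm
      (A ++ u :: (B ++ x :: (C ++ v :: D))) := by
    have : ((A ++ u :: B) ++ (C ++ v :: x :: D)) = A ++ u :: (B ++ (C ++ v :: x :: D)) := by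
      simp
    rw [this]
    exact List.Perm.append_left A (List.Perm.cons u (List.Perm.append_left B h3))
  rw [e1]
  exact h2.trans (List.Perm.cons mm h4)

private lemma even_ne_odd {x m q : ℕ} (hm : m = 2 * q - 1) (hq : 0 < q) :
    2 * x ≠ m := by omega

lemma keyA (LA LB LC LD : List ℕ) (p q r : ℕ) (τ υ : List ℕ)
    (hnd : (LA ++ p :: (LB ++ q :: (LC ++ r :: LD))).Nodup)
    (hpos : ∀ x ∈ LA ++ p :: (LB ++ q :: (LC ++ r :: LD)), 0 < x)
    (hpq : p < q) (hqr : q < r)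
    (hτ : OrdIso τ (LA ++ p :: (LB ++ q :: (LC ++ r :: LD))))
    (hυ : OrdIso (LA ++ p :: (LB ++ r :: (LC ++ q :: LD))) υ)
    (hυP : IsPermList υ) :
    ∃ μ, IsResult pat13S pat123 τ μ ∧ IsResult pat123 pat13S μ υ := by
  set L₁ := LA ++ p :: (LB ++ q :: (LC ++ r :: LD)) with hL₁
  set L₂ := LA ++ p :: (LB ++ r :: (LC ++ q :: LD)) with hL₂
  have hq0 : 0 < q := hpos q (by simp [hL₁])
  have hp0 : 0 < p := hpos p (by simp [hL₁])
  set m : ℕ := 2 * q - 1 with hm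
  set sc : List ℕ → List ℕ := List.map (fun x => 2 * x) with hsc
  set esc : List ℕ → SPat := fun l => (sc l).map some with hesc
  set M : List ℕ := sc LA ++ 2*p :: (sc LB ++ m :: (sc LC ++ 2*r :: 2*q :: sc LD)) with hM
  -- basic facts
  have hscL₁ : sc L₁ = sc LA ++ 2*p :: (sc LB ++ 2*q :: (sc LC ++ 2*r :: sc LD)) := by
    simp [hsc, hL₁]
  have hndsc : (sc L₁).Nodup := hnd.map (fun a b h => by omega)
  have hmnot : m ∉ sc L₁ := by
    intro hc
    rcases List.mem_map.1 hc with ⟨x, _, hx⟩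
    exact even_ne_odd hm hq0 hx
  have hpermM : M.Perm (m :: sc L₁) := by
    rw [hM, hscL₁]
    exact perm_help (sc LA) (sc LB) (sc LC) (sc LD) (2*p) (2*r) (2*q) m
  have hndM : M.Nodup := hpermM.nodup_iff.2 (List.nodup_cons.2 ⟨hmnot, hndsc⟩)
  have hposM : ∀ x ∈ M, 0 < x := by
    intro x hx
    rcases List.mem_cons.1 (hpermM.mem_iff.1 hx) with rfl | hx'
    · omega
    · rcases List.mem_map.1 hx' with ⟨y, hy, rfl⟩
      have := hpos y hy; omega
  refine ⟨std M, ?_, ?_⟩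
  · -- R step : insert m, move 2q
    refine ⟨esc LA ++ some (2*p) :: (esc LB ++ some (2*q) :: ((esc LC ++ [some (2*r)]) ++ none :: esc LD)),
      esc LA ++ some (2*p) :: (esc LB ++ some m :: ((esc LC ++ [some (2*r)]) ++ some (2*q) :: esc LD)),
      [some (2*p), some (2*q), none], [some (2*p), some m, some (2*q)],
      ?_, ?_, ?_, ?_, ?_, ?_, ?_, ?_, ?_, ?_⟩
    · constructor
      · have : ints (esc LA ++ some (2*p) :: (esc LB ++ some (2*q) :: ((esc LC ++ [some (2*r)]) ++ none :: esc LD))) = sc L₁ := by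
          simp [hesc, ints_append, ints_cons_some, ints_cons_none, ints_emb, hscL₁, ints]
        rw [this]; exact hndsc
      · intro k hk
        have : ints (esc LA ++ some (2*p) :: (esc LB ++ some (2*q) :: ((esc LC ++ [some (2*r)]) ++ none :: esc LD))) = sc L₁ := by
          simp [hesc, ints_append, ints_cons_some, ints_cons_none, ints_emb, hscL₁, ints]
        rw [this] at hk
        rcases List.mem_map.1 hk with ⟨y, hy, rfl⟩
        have := hpos y hy; omega
    · have : ints (esc LA ++ some (2*p) :: (esc LB ++ some (2*q) :: ((esc LC ++ [some (2*r)]) ++ none :: esc LD))) = sc L₁ := by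
        simp [hesc, ints_append, ints_cons_some, ints_cons_none, ints_emb, hscL₁, ints]
      rw [this]
      exact hτ.trans (ordIso_scale L₁)
    · exact isCopy_13S (by omega)
    · constructor
      · simp [ints]; omega
      · intro k hk; simp [ints] at hk; omega
    · exact isCopy_123 (by omega) (by omega)
    · intro k hk hk'
      simp [ints] at hk ⊢
      have : ints (esc LA ++ some (2*p) :: (esc LB ++ some (2*q) :: ((esc LC ++ [some (2*r)]) ++ none :: esc LD))) = sc L₁ := by
        simp [hesc, ints_append, ints_cons_some, ints_cons_none, ints_emb, hscL₁, ints]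
      rw [this] at hk'
      rcases hk with rfl | rfl | rfl
      · left; rfl
      · exact absurd hk' hmnot
      · right; rfl
    · intro i j x h1 h2
      rcases i with _ | _ | _ | i <;> rcases j with _ | _ | _ | j <;>
        simp [pat13S, pat123] at h1 h2 ⊢ <;> omega
    · exact repl3_intro _ _ _ _ _ _ (esc LA) (esc LB) (esc LC ++ [some (2*r)]) (esc LD)
    · exact isPermList_std M hndM
    · have : ints (esc LA ++ some (2*p) :: (esc LB ++ some m :: ((esc LC ++ [some (2*r)]) ++ some (2*q) :: esc LD))) = M := by
        simp [hesc, ints_append, ints_cons_some, ints_emb, hM, ints]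
      rw [this]
      exact ordIso_std M
  · -- F step : delete m, move 2r
    refine ⟨esc LA ++ some (2*p) :: (esc LB ++ some m :: (esc LC ++ some (2*r) :: (some (2*q) :: esc LD))),
      esc LA ++ some (2*p) :: (esc LB ++ some (2*r) :: (esc LC ++ none :: (some (2*q) :: esc LD))),
      [some (2*p), some m, some (2*r)], [some (2*p), some (2*r), none],
      ?_, ?_, ?_, ?_, ?_, ?_, ?_, ?_, ?_, ?_⟩
    · constructor
      · have : ints (esc LA ++ some (2*p) :: (esc LB ++ some m :: (esc LC ++ some (2*r) :: (some (2*q) :: esc LD)))) = M := by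
          simp [hesc, ints_append, ints_cons_some, ints_emb, hM, ints]
        rw [this]; exact hndM
      · intro k hk
        have : ints (esc LA ++ some (2*p) :: (esc LB ++ some m :: (esc LC ++ some (2*r) :: (some (2*q) :: esc LD)))) = M := by
          simp [hesc, ints_append, ints_cons_some, ints_emb, hM, ints]
        rw [this] at hk
        exact hposM k hk
    · have : ints (esc LA ++ some (2*p) :: (esc LB ++ some m :: (esc LC ++ some (2*r) :: (some (2*q) :: esc LD)))) = M := by
        simp [hesc, ints_append, ints_cons_some, ints_emb, hM, ints]
      rw [this]
      exact (ordIso_std M).symm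
    · exact isCopy_123 (by omega) (by omega)
    · constructor
      · simp [ints]; omega
      · intro k hk; simp [ints] at hk; omega
    · exact isCopy_13S (by omega)
    · intro k hk hk'
      simp [ints] at hk ⊢
      omega
    · intro i j x h1 h2
      rcases i with _ | _ | _ | i <;> rcases j with _ | _ | _ | j <;>
        simp [pat13S, pat123] at h1 h2 ⊢ <;> omega
    · exact repl3_intro _ _ _ _ _ _ (esc LA) (esc LB) (esc LC) (some (2*q) :: esc LD)
    · exact hυP
    · have : ints (esc LA ++ some (2*p) :: (esc LB ++ some (2*r) :: (esc LC ++ none :: (some (2*q) :: esc LD)))) = sc L₂ := by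
        simp [hesc, ints_append, ints_cons_some, ints_cons_none, ints_emb, hL₂, hsc, ints]
      rw [this]
      exact (ordIso_scale L₂).symm.trans hυ

end Key
section KeyB

lemma keyB (LA LB LC LD : List ℕ) (p q r : ℕ) (τ υ : List ℕ)
    (hnd : (LA ++ p :: (LB ++ r :: (LC ++ q :: LD))).Nodup)
    (hpos : ∀ x ∈ LA ++ p :: (LB ++ r :: (LC ++ q :: LD)), 0 < x)
    (hpq : p < q) (hqr : q < r)
    (hτ : OrdIso τ (LA ++ p :: (LB ++ r :: (LC ++ q :: LD))))
    (hυ : OrdIso (LA ++ p :: (LB ++ q :: (LC ++ r :: LD))) υ)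
    (hυP : IsPermList υ) :
    ∃ μ, IsResult pat13S pat123 τ μ ∧ IsResult pat123 pat13S μ υ := by
  set L₁ := LA ++ p :: (LB ++ r :: (LC ++ q :: LD)) with hL₁
  set L₂ := LA ++ p :: (LB ++ q :: (LC ++ r :: LD)) with hL₂
  have hq0 : 0 < q := hpos q (by simp [hL₁])
  have hp0 : 0 < p := hpos p (by simp [hL₁])
  set m : ℕ := 2 * q - 1 with hm
  set sc : List ℕ → List ℕ := List.map (fun x => 2 * x) with hsc
  set esc : List ℕ → SPat := fun l => (sc l).map some with hesc
  set M : List ℕ := sc LA ++ 2*p :: (sc LB ++ m :: (sc LC ++ 2*q :: 2*r :: sc LD)) with hM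
  have hscL₁ : sc L₁ = sc LA ++ 2*p :: (sc LB ++ 2*r :: (sc LC ++ 2*q :: sc LD)) := by
    simp [hsc, hL₁]
  have hndsc : (sc L₁).Nodup := hnd.map (fun a b h => by omega)
  have hmnot : m ∉ sc L₁ := by
    intro hc
    rcases List.mem_map.1 hc with ⟨x, _, hx⟩
    exact even_ne_odd hm hq0 hx
  have hpermM : M.Perm (m :: sc L₁) := by
    rw [hM, hscL₁]
    exact perm_help (sc LA) (sc LB) (sc LC) (sc LD) (2*p) (2*q) (2*r) m
  have hndM : M.Nodup := hpermM.nodup_iff.2 (List.nodup_cons.2 ⟨hmnot, hndsc⟩)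
  have hposM : ∀ x ∈ M, 0 < x := by
    intro x hx
    rcases List.mem_cons.1 (hpermM.mem_iff.1 hx) with rfl | hx'
    · omega
    · rcases List.mem_map.1 hx' with ⟨y, hy, rfl⟩
      have := hpos y hy; omega
  refine ⟨std M, ?_, ?_⟩
  · -- R step : insert m, move 2r
    refine ⟨esc LA ++ some (2*p) :: (esc LB ++ some (2*r) :: ((esc LC ++ [some (2*q)]) ++ none :: esc LD)),
      esc LA ++ some (2*p) :: (esc LB ++ some m :: ((esc LC ++ [some (2*q)]) ++ some (2*r) :: esc LD)),
      [some (2*p), some (2*r), none], [some (2*p), some m, some (2*r)],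
      ?_, ?_, ?_, ?_, ?_, ?_, ?_, ?_, ?_, ?_⟩
    · constructor
      · have : ints (esc LA ++ some (2*p) :: (esc LB ++ some (2*r) :: ((esc LC ++ [some (2*q)]) ++ none :: esc LD))) = sc L₁ := by
          simp [hesc, ints_append, ints_cons_some, ints_cons_none, ints_emb, hscL₁, ints]
        rw [this]; exact hndsc
      · intro k hk
        have : ints (esc LA ++ some (2*p) :: (esc LB ++ some (2*r) :: ((esc LC ++ [some (2*q)]) ++ none :: esc LD))) = sc L₁ := by
          simp [hesc, ints_append, ints_cons_some, ints_cons_none, ints_emb, hscL₁, ints]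
        rw [this] at hk
        rcases List.mem_map.1 hk with ⟨y, hy, rfl⟩
        have := hpos y hy; omega
    · have : ints (esc LA ++ some (2*p) :: (esc LB ++ some (2*r) :: ((esc LC ++ [some (2*q)]) ++ none :: esc LD))) = sc L₁ := by
        simp [hesc, ints_append, ints_cons_some, ints_cons_none, ints_emb, hscL₁, ints]
      rw [this]
      exact hτ.trans (ordIso_scale L₁)
    · exact isCopy_13S (by omega)
    · constructor
      · simp [ints]; omega
      · intro k hk; simp [ints] at hk; omega
    · exact isCopy_123 (by omega) (by omega)
    · intro k hk hk'
      simp [ints] at hk ⊢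
      have : ints (esc LA ++ some (2*p) :: (esc LB ++ some (2*r) :: ((esc LC ++ [some (2*q)]) ++ none :: esc LD))) = sc L₁ := by
        simp [hesc, ints_append, ints_cons_some, ints_cons_none, ints_emb, hscL₁, ints]
      rw [this] at hk'
      rcases hk with rfl | rfl | rfl
      · left; rfl
      · exact absurd hk' hmnot
      · right; rfl
    · intro i j x h1 h2
      rcases i with _ | _ | _ | i <;> rcases j with _ | _ | _ | j <;>
        simp [pat13S, pat123] at h1 h2 ⊢ <;> omega
    · exact repl3_intro _ _ _ _ _ _ (esc LA) (esc LB) (esc LC ++ [some (2*q)]) (esc LD)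
    · exact isPermList_std M hndM
    · have : ints (esc LA ++ some (2*p) :: (esc LB ++ some m :: ((esc LC ++ [some (2*q)]) ++ some (2*r) :: esc LD))) = M := by
        simp [hesc, ints_append, ints_cons_some, ints_emb, hM, ints]
      rw [this]
      exact ordIso_std M
  · -- F step : delete m, move 2q
    refine ⟨esc LA ++ some (2*p) :: (esc LB ++ some m :: (esc LC ++ some (2*q) :: (some (2*r) :: esc LD))),
      esc LA ++ some (2*p) :: (esc LB ++ some (2*q) :: (esc LC ++ none :: (some (2*r) :: esc LD))),
      [some (2*p), some m, some (2*q)], [some (2*p), some (2*q), none],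
      ?_, ?_, ?_, ?_, ?_, ?_, ?_, ?_, ?_, ?_⟩
    · constructor
      · have : ints (esc LA ++ some (2*p) :: (esc LB ++ some m :: (esc LC ++ some (2*q) :: (some (2*r) :: esc LD)))) = M := by
          simp [hesc, ints_append, ints_cons_some, ints_emb, hM, ints]
        rw [this]; exact hndM
      · intro k hk
        have : ints (esc LA ++ some (2*p) :: (esc LB ++ some m :: (esc LC ++ some (2*q) :: (some (2*r) :: esc LD)))) = M := by
          simp [hesc, ints_append, ints_cons_some, ints_emb, hM, ints]
        rw [this] at hk
        exact hposM k hk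
    · have : ints (esc LA ++ some (2*p) :: (esc LB ++ some m :: (esc LC ++ some (2*q) :: (some (2*r) :: esc LD)))) = M := by
        simp [hesc, ints_append, ints_cons_some, ints_emb, hM, ints]
      rw [this]
      exact (ordIso_std M).symm
    · exact isCopy_123 (by omega) (by omega)
    · constructor
      · simp [ints]; omega
      · intro k hk; simp [ints] at hk; omega
    · exact isCopy_13S (by omega)
    · intro k hk hk'
      simp [ints] at hk ⊢
      omega
    · intro i j x h1 h2
      rcases i with _ | _ | _ | i <;> rcases j with _ | _ | _ | j <;>
        simp [pat13S, pat123] at h1 h2 ⊢ <;> omega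
    · exact repl3_intro _ _ _ _ _ _ (esc LA) (esc LB) (esc LC) (some (2*r) :: esc LD)
    · exact hυP
    · have : ints (esc LA ++ some (2*p) :: (esc LB ++ some (2*q) :: (esc LC ++ none :: (some (2*r) :: esc LD)))) = sc L₂ := by
        simp [hesc, ints_append, ints_cons_some, ints_cons_none, ints_emb, hL₂, hsc, ints]
      rw [this]
      exact (ordIso_scale L₂).symm.trans hυ

end KeyB
/-- if two permutations of equal length are equivalent under the
(length-preserving) bidirectional replacement `123 ↔ 132`, then they are
equivalent under `123 ↔ 13★`. -/
theorem equiv132_implies_equiv13star (π σ : List ℕ) (hπ : IsPermList π)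
    (hσ : IsPermList σ) (hlen : π.length = σ.length)
    (h : PermEquiv pat123 pat132 π σ) :
    PermEquiv pat123 pat13S π σ := by
  clear hσ hlen
  induction h with
  | refl => exact Relation.ReflTransGen.refl
  | tail hstep hlast ih =>
    rcases hlast with hA | hB
    · obtain ⟨LA, LB, LC, LD, p, q, r, hnd, hpos, hpq, hqr, hτ, hυ, hυP⟩ := extractA hA
      obtain ⟨μ, hR, hF⟩ := keyA LA LB LC LD p q r _ _ hnd hpos hpq hqr hτ hυ hυP
      exact (ih.tail (Or.inr hR)).tail (Or.inl hF)
    · obtain ⟨LA, LB, LC, LD, p, q, r, hnd, hpos, hpq, hqr, hτ, hυ, hυP⟩ := extractB hB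
      obtain ⟨μ, hR, hF⟩ := keyB LA LB LC LD p q r _ _ hnd hpos hpq hqr hτ hυ hυP
      exact (ih.tail (Or.inr hR)).tail (Or.inl hF)
end
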